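/- arXiv:1512.03678 — 8 statements merged into one kernel-verified Lean document; each statement's English description precedes it below -/
import Mathlib

section
/- Let R be a commutative ring and α, β ∈ R, and for r ≥ 0 set a_r = ∑_{i=0}^{r} α^i β^{r-i}. Then in the formal power series ring R[[X]] one has the identity (1 − α²X)(1 − αβX)(1 − β²X) · ∑_{r≥0} a_r² X^r = 1 + αβX. -/
open PowerSeries

private lemma a_step {R : Type*} [CommRing R] (α β : R)
    (a : ℕ → R) (ha : ∀ r : ℕ, a r = ∑ i ∈ Finset.range (r + 1), α ^ i * β ^ (r - i)) :
    ∀ n : ℕ, a (n + 1) = α * a n + β ^ (n + 1) := by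
  intro n
  rw [ha, ha, Finset.sum_range_succ']
  rw [Finset.mul_sum]
  congr 1
  · refine Finset.sum_congr rfl fun i hi => ?_
    simp only [Finset.mem_range] at hi
    have : n + 1 - (i + 1) = n - i := by omega
    rw [this]; ring
  · simp

private lemma a_rec {R : Type*} [CommRing R] (α β : R)
    (a : ℕ → R) (ha : ∀ r : ℕ, a r = ∑ i ∈ Finset.range (r + 1), α ^ i * β ^ (r - i)) :
    ∀ n : ℕ, a (n + 3) ^ 2 =
      (α ^ 2 + α * β + β ^ 2) * a (n + 2) ^ 2
      - (α * β * (α ^ 2 + α * β + β ^ 2)) * a (n + 1) ^ 2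
      + (α ^ 3 * β ^ 3) * a n ^ 2 := by
  intro n
  have h3 : a (n + 3) = α * a (n + 2) + β ^ (n + 3) := a_step α β a ha (n + 2)
  have h2 : a (n + 2) = α * a (n + 1) + β ^ (n + 2) := a_step α β a ha (n + 1)
  have h1 : a (n + 1) = α * a n + β ^ (n + 1) := a_step α β a ha n
  rw [h3, h2, h1]
  ring

/-- For a commutative ring `R` and `α β : R`, with
`a r = ∑_{i=0}^{r} α^i β^(r-i)`, we have in `R[[X]]`:
`(1 - α²X)(1 - αβX)(1 - β²X) · ∑_{r≥0} a_r² X^r = 1 + αβX`. -/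
theorem symm_square_local_factor_squared_coeffs
    (R : Type*) [CommRing R] (α β : R)
    (a : ℕ → R) (ha : ∀ r : ℕ, a r = ∑ i ∈ Finset.range (r + 1), α ^ i * β ^ (r - i)) :
    (1 - PowerSeries.C (α ^ 2) * PowerSeries.X) *
      (1 - PowerSeries.C (α * β) * PowerSeries.X) *
      (1 - PowerSeries.C (β ^ 2) * PowerSeries.X) *
      PowerSeries.mk (fun r => a r ^ 2) =
    1 + PowerSeries.C (α * β) * PowerSeries.X := by
  have ha0 : a 0 = 1 := by simp [ha]
  have ha1 : a 1 = α + β := by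
    rw [ha]; simp [Finset.sum_range_succ]; ring
  have ha2 : a 2 = α ^ 2 + α * β + β ^ 2 := by
    rw [ha]; simp [Finset.sum_range_succ]; ring
  set c1 : R := α ^ 2 + α * β + β ^ 2 with hc1
  set c2 : R := α * β * (α ^ 2 + α * β + β ^ 2) with hc2
  set c3 : R := α ^ 3 * β ^ 3 with hc3
  have key : (1 - PowerSeries.C (α ^ 2) * PowerSeries.X) *
      (1 - PowerSeries.C (α * β) * PowerSeries.X) *
      (1 - PowerSeries.C (β ^ 2) * PowerSeries.X) =
      1 - PowerSeries.C c1 * X + PowerSeries.C c2 * X ^ 2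
        - PowerSeries.C c3 * X ^ 3 := by
    simp only [hc1, hc2, hc3, map_add, map_mul, map_pow]
    ring
  rw [key]
  ext n
  have expand : ∀ m : ℕ,
      (coeff m) ((1 - PowerSeries.C c1 * X + PowerSeries.C c2 * X ^ 2
        - PowerSeries.C c3 * X ^ 3) * PowerSeries.mk (fun r => a r ^ 2)) =
      (coeff m) (PowerSeries.mk (fun r => a r ^ 2))
      - c1 * (coeff m) (X * PowerSeries.mk (fun r => a r ^ 2))
      + c2 * (coeff m) (X ^ 2 * PowerSeries.mk (fun r => a r ^ 2))
      - c3 * (coeff m) (X ^ 3 * PowerSeries.mk (fun r => a r ^ 2)) := by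
    intro m
    simp [sub_mul, add_mul, one_mul, mul_assoc, map_sub, map_add, coeff_C_mul]
  match n with
  | 0 =>
    rw [expand]
    simp [coeff_X_pow_mul', ha0]
  | 1 =>
    rw [expand]
    have : (X : R⟦X⟧) = X ^ 1 := (pow_one _).symm
    rw [this]
    simp [coeff_X_pow_mul', ha0, ha1, hc1]
    ring
  | 2 =>
    rw [expand]
    have : (X : R⟦X⟧) = X ^ 1 := (pow_one _).symm
    rw [this]
    simp [coeff_X_pow_mul', ha0, ha1, ha2, hc1, hc2]
    ring
  | (m + 3) =>
    rw [expand]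
    have hx1 : (coeff (m + 3)) (X * PowerSeries.mk (fun r => a r ^ 2)) = a (m + 2) ^ 2 := by
      rw [show m + 3 = (m + 2) + 1 by omega, coeff_succ_X_mul, coeff_mk]
    have hx2 : (coeff (m + 3)) (X ^ 2 * PowerSeries.mk (fun r => a r ^ 2)) = a (m + 1) ^ 2 := by
      rw [show m + 3 = (m + 1) + 2 by omega, coeff_X_pow_mul, coeff_mk]
    have hx3 : (coeff (m + 3)) (X ^ 3 * PowerSeries.mk (fun r => a r ^ 2)) = a m ^ 2 := by
      rw [coeff_X_pow_mul, coeff_mk]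
    rw [coeff_mk, hx1, hx2, hx3, a_rec α β a ha m]
    have hco : (coeff (m + 3)) (1 + PowerSeries.C (α * β) * X) = 0 := by
      simp [coeff_one, coeff_C_mul, coeff_X]
    rw [hco]
    ring
end

section
/- Let R be a commutative ring and α, β ∈ R, and for r ≥ 0 set a_r = ∑_{i=0}^{r} α^i β^{r-i}. Then in the formal power series ring R[[X]] one has the identity (1 − α²X)(1 − αβX)²(1 − β²X) · ∑_{r≥0} a_r² X^r = 1 − α²β²X². (The quartic on the left is the local Euler factor of the Rankin–Selberg convolution f ⊗ f at ℓ.) -/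
open PowerSeries

private lemma step_aux {R : Type*} [CommRing R] (α β : R) (n : ℕ) :
    ∑ i ∈ Finset.range (n + 2), α ^ i * β ^ (n + 1 - i)
      = α ^ (n + 1) + β * ∑ i ∈ Finset.range (n + 1), α ^ i * β ^ (n - i) := by
  rw [Finset.sum_range_succ, Finset.mul_sum]
  have : ∀ i ∈ Finset.range (n + 1),
      α ^ i * β ^ (n + 1 - i) = β * (α ^ i * β ^ (n - i)) := by
    intro i hi
    rw [Finset.mem_range] at hi
    have : n + 1 - i = (n - i) + 1 := by omega
    rw [this, pow_succ]; ring
  rw [Finset.sum_congr rfl this]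
  simp; ring

/-- For a commutative ring `R` and `α β : R`, with
`a r = ∑_{i=0}^{r} α^i β^(r-i)`, we have in `R[[X]]`:
`(1 - α²X)(1 - αβX)²(1 - β²X) · ∑_{r≥0} a_r² X^r = 1 - α²β²X²`,
the quartic being the local Euler factor of the Rankin–Selberg convolution `f ⊗ f`. -/
theorem rankin_selberg_local_factor_squared_coeffs
    (R : Type*) [CommRing R] (α β : R)
    (a : ℕ → R) (ha : ∀ r : ℕ, a r = ∑ i ∈ Finset.range (r + 1), α ^ i * β ^ (r - i)) :
    (1 - PowerSeries.C (α ^ 2) * PowerSeries.X) *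
      (1 - PowerSeries.C (α * β) * PowerSeries.X) ^ 2 *
      (1 - PowerSeries.C (β ^ 2) * PowerSeries.X) *
      PowerSeries.mk (fun r => a r ^ 2) =
    1 - PowerSeries.C (α ^ 2 * β ^ 2) * PowerSeries.X ^ 2 := by
  have hstep : ∀ n : ℕ, a (n + 1) = α ^ (n + 1) + β * a n := by
    intro n; rw [ha, ha, step_aux]
  have hrec : ∀ n : ℕ, a (n + 2) = (α + β) * a (n + 1) - (α * β) * a n := by
    intro n
    have h1 := hstep n
    have h2 := hstep (n + 1)
    have e : n + 1 + 1 = n + 2 := rfl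
    rw [e] at h2
    rw [h2, h1]; ring
  have ha0 : a 0 = 1 := by simp [ha]
  have ha1 : a 1 = α + β := by
    rw [ha]; simp [Finset.sum_range_succ]; ring
  have ha2 : a 2 = α ^ 2 + α * β + β ^ 2 := by
    rw [ha]; simp [Finset.sum_range_succ]; ring
  -- square recurrence
  have hb : ∀ n : ℕ, a (n + 3) ^ 2
      = (α ^ 2 + α * β + β ^ 2) * a (n + 2) ^ 2
        - (α ^ 3 * β + α ^ 2 * β ^ 2 + α * β ^ 3) * a (n + 1) ^ 2
        + (α * β) ^ 3 * a n ^ 2 := by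
    intro n
    have h1 := hrec n
    have h2 := hrec (n + 1)
    have e : n + 1 + 2 = n + 3 := rfl
    rw [e] at h2
    rw [h2, h1]; ring
  set S : PowerSeries R := PowerSeries.mk (fun r => a r ^ 2) with hS
  have key : (1 - PowerSeries.C (α ^ 2 + α * β + β ^ 2) * PowerSeries.X
      + PowerSeries.C (α ^ 3 * β + α ^ 2 * β ^ 2 + α * β ^ 3) * PowerSeries.X ^ 2
      - PowerSeries.C ((α * β) ^ 3) * PowerSeries.X ^ 3) * S
      = 1 + PowerSeries.C (α * β) * PowerSeries.X := by
    ext n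
    simp only [sub_mul, add_mul, one_mul, map_add, map_sub, map_one,
      mul_assoc, PowerSeries.coeff_C_mul, ← PowerSeries.X_pow_eq]
    rw [show (PowerSeries.X : R⟦X⟧) * S = PowerSeries.X ^ 1 * S by rw [pow_one]]
    rw [PowerSeries.coeff_X_pow_mul', PowerSeries.coeff_X_pow_mul',
      PowerSeries.coeff_X_pow_mul']
    match n with
    | 0 => simp [hS, ha0, PowerSeries.coeff_one, PowerSeries.coeff_X]
    | 1 => simp [hS, ha0, ha1, PowerSeries.coeff_one, PowerSeries.coeff_X]; ring
    | 2 => simp [hS, ha0, ha1, ha2, PowerSeries.coeff_one, PowerSeries.coeff_X]; ring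
    | (n + 3) =>
      have e1 : n + 3 - 1 = n + 2 := rfl
      have e2 : n + 3 - 2 = n + 1 := rfl
      have e3 : n + 3 - 3 = n := rfl
      simp only [hS, PowerSeries.coeff_mk, PowerSeries.coeff_one, PowerSeries.coeff_X,
        if_pos (show 1 ≤ n + 3 by omega), if_pos (show 2 ≤ n + 3 by omega),
        if_pos (show 3 ≤ n + 3 by omega), if_neg (show ¬ (n + 3 = 0) by omega),
        if_neg (show ¬ (n + 3 = 1) by omega), e1, e2, e3]
      linear_combination hb n
  have expand : (1 - PowerSeries.C (α ^ 2) * PowerSeries.X)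
      * (1 - PowerSeries.C (α * β) * PowerSeries.X)
      * (1 - PowerSeries.C (β ^ 2) * PowerSeries.X)
      = 1 - PowerSeries.C (α ^ 2 + α * β + β ^ 2) * PowerSeries.X
      + PowerSeries.C (α ^ 3 * β + α ^ 2 * β ^ 2 + α * β ^ 3) * PowerSeries.X ^ 2
      - PowerSeries.C ((α * β) ^ 3) * PowerSeries.X ^ 3 := by
    simp only [map_add, map_mul, map_pow]
    ring
  have key2 : (1 - PowerSeries.C (α ^ 2) * PowerSeries.X)
      * (1 - PowerSeries.C (α * β) * PowerSeries.X)
      * (1 - PowerSeries.C (β ^ 2) * PowerSeries.X) * S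
      = 1 + PowerSeries.C (α * β) * PowerSeries.X := by
    rw [expand]; exact key
  have hC2 : PowerSeries.C (α ^ 2 * β ^ 2)
      = PowerSeries.C (α * β) * PowerSeries.C (α * β) := by
    rw [← map_mul]; ring_nf
  rw [hC2]
  linear_combination (1 - PowerSeries.C (α * β) * PowerSeries.X) * key2
end

section
/- Let R be a commutative ring and α, β ∈ R, and for r ≥ 0 set a_r = ∑_{i=0}^{r} α^i β^{r-i}. Then in the formal power series ring R[[X]] one has the identity (∑_{m≥0} (αβ)^m X^m) · (∑_{r≥0} a_{2r} X^r) = ∑_{r≥0} a_r² X^r. (This is the local form of the paper's identity relating ∑ a_{n²}(f)χ(n)n^{−s} and ∑ a_n(f)²χ(n)n^{−s} via the Dirichlet L-factor L_N(χε, s−k+1).) -/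
/-- For a commutative ring `R` and `α β : R`, with
`a r = ∑_{i=0}^{r} α^i β^(r-i)`, we have in `R[[X]]`:
`(∑_{m≥0} (αβ)^m X^m) · (∑_{r≥0} a_{2r} X^r) = ∑_{r≥0} a_r² X^r`. -/
theorem even_coeffs_times_geometric_eq_squared_coeffs
    (R : Type*) [CommRing R] (α β : R)
    (a : ℕ → R) (ha : ∀ r : ℕ, a r = ∑ i ∈ Finset.range (r + 1), α ^ i * β ^ (r - i)) :
    PowerSeries.mk (fun m => (α * β) ^ m) * PowerSeries.mk (fun r => a (2 * r)) =
      PowerSeries.mk (fun r => a r ^ 2) := by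
  have ha0 : a 0 = 1 := by simp [ha]
  have hA : ∀ n, a (n + 1) = α ^ (n + 1) + β * a n := by
    intro n
    rw [ha, ha, Finset.sum_range_succ, Finset.mul_sum, Nat.sub_self, pow_zero, mul_one, add_comm]
    congr 1
    apply Finset.sum_congr rfl
    intro i hi
    rw [Finset.mem_range] at hi
    rw [show n + 1 - i = (n - i) + 1 by omega, pow_succ]
    ring
  have hB : ∀ n, a (n + 1) = β ^ (n + 1) + α * a n := by
    intro n
    rw [ha, ha, Finset.sum_range_succ', Finset.mul_sum, pow_zero, one_mul, Nat.sub_zero, add_comm]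
    congr 1
    apply Finset.sum_congr rfl
    intro i hi
    rw [Finset.mem_range] at hi
    rw [show n + 1 - (i + 1) = n - i by omega, pow_succ]
    ring
  have hD : ∀ n, a (2 * n + 2) = (α * β) ^ (n + 1) + (α ^ (n + 2) + β ^ (n + 2)) * a n := by
    intro n
    induction n with
    | zero => rw [show 2 * 0 + 2 = 0 + 1 + 1 from rfl, hA, hA, ha0]; ring
    | succ n ih =>
      have hC : α ^ (n + 1) + β * a n = β ^ (n + 1) + α * a n := (hA n).symm.trans (hB n)
      rw [show 2 * (n + 1) + 2 = (2 * n + 3) + 1 by ring, hA, show 2 * n + 3 = (2 * n + 2) + 1 from rfl,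
        hB, ih, hA n]
      linear_combination (-β ^ (n + 3)) * hC
  have hKey : ∀ n, a (n + 1) ^ 2 = a (2 * n + 2) + α * β * a n ^ 2 := by
    intro n
    rw [sq]
    nth_rewrite 1 [hA n]
    nth_rewrite 1 [hB n]
    rw [hD n]
    ring
  have hgeo : ((1 : PowerSeries R) - PowerSeries.C (α * β) * PowerSeries.X) *
      PowerSeries.mk (fun m => (α * β) ^ m) = 1 := by
    ext n
    cases n with
    | zero => simp
    | succ n =>
      rw [sub_mul, one_mul]
      simp only [map_sub, PowerSeries.coeff_mk, mul_assoc, PowerSeries.coeff_C_mul,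
        PowerSeries.coeff_succ_X_mul, PowerSeries.coeff_one]
      rw [if_neg (by omega : ¬ (n + 1 = 0)), pow_succ]
      ring
  have key : ((1 : PowerSeries R) - PowerSeries.C (α * β) * PowerSeries.X) *
      PowerSeries.mk (fun r => a r ^ 2) = PowerSeries.mk (fun r => a (2 * r)) := by
    ext n
    cases n with
    | zero => simp [ha0]
    | succ n =>
      rw [sub_mul, one_mul]
      simp only [map_sub, PowerSeries.coeff_mk, mul_assoc, PowerSeries.coeff_C_mul,
        PowerSeries.coeff_succ_X_mul]
      rw [show 2 * (n + 1) = 2 * n + 2 by ring, hKey n]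
      ring
  rw [← key, ← mul_assoc,
    mul_comm (PowerSeries.mk fun m => (α * β) ^ m)
      ((1 : PowerSeries R) - PowerSeries.C (α * β) * PowerSeries.X), hgeo, one_mul]
end

section
/- For every s ∈ ℂ with Re(s) > k, the three series ∑_{m≥1} χ(m)ε(m) m^{k−1−s}, ∑_{n≥1} a(n²) χ(n) n^{−s}, and ∑_{n≥1} a(n)² χ(n) n^{−s} converge absolutely, and one has the identity (∑_{m≥1} χ(m)ε(m) m^{k−1−s}) · (∑_{n≥1} a(n²) χ(n) n^{−s}) = ∑_{n≥1} a(n)² χ(n) n^{−s}. -/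
namespace SymmSqAux

noncomputable def S (x y : ℂ) (r : ℕ) : ℂ := ∑ i ∈ Finset.range (r + 1), x ^ i * y ^ (r - i)

lemma S_zero (x y : ℂ) : S x y 0 = 1 := by simp [S]

lemma S_succ (x y : ℂ) (r : ℕ) : S x y (r + 1) = x * S x y r + y ^ (r + 1) := by
  rw [S, Finset.sum_range_succ' (fun i => x ^ i * y ^ (r + 1 - i)) (r + 1)]
  simp only [pow_zero, one_mul, Nat.sub_zero]
  rw [S, Finset.mul_sum]
  congr 1
  refine Finset.sum_congr rfl fun i hi => ?_
  have h : r + 1 - (i + 1) = r - i := by omega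
  rw [h, pow_succ]
  ring

lemma S_comm (x y : ℂ) (r : ℕ) : S x y r = S y x r := by
  rw [S, S, ← Finset.sum_range_reflect]
  refine Finset.sum_congr rfl fun i hi => ?_
  have hi' : i ≤ r := by simpa [Nat.lt_succ_iff] using hi
  have h1 : r + 1 - 1 - i = r - i := by omega
  have h2 : r - (r - i) = i := by omega
  rw [h1, h2, mul_comm]

lemma S_split (x y : ℂ) (a b : ℕ) :
    S x y (a + b + 1) = x ^ (b + 1) * S x y a + y ^ (a + 1) * S x y b := by
  induction b with
  | zero => rw [S_succ, S_zero]; ring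
  | succ b ih =>
    have h : a + (b + 1) + 1 = (a + b + 1) + 1 := by omega
    rw [h, S_succ, ih, S_succ]
    ring

lemma S_sq (x y : ℂ) (r : ℕ) :
    S x y r ^ 2 = ∑ j ∈ Finset.range (r + 1), (x * y) ^ j * S x y (2 * (r - j)) := by
  induction r with
  | zero => simp [S_zero]
  | succ r ih =>
    rw [Finset.sum_range_succ' (fun j => (x * y) ^ j * S x y (2 * (r + 1 - j))) (r + 1)]
    have hre : ∀ i ∈ Finset.range (r + 1),
        (x * y) ^ (i + 1) * S x y (2 * (r + 1 - (i + 1)))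
          = (x * y) * ((x * y) ^ i * S x y (2 * (r - i))) := by
      intro i hi
      have h : r + 1 - (i + 1) = r - i := by omega
      rw [h, pow_succ]
      ring
    rw [Finset.sum_congr rfl hre, ← Finset.mul_sum, ← ih]
    have h1 : S x y (r + 1) = x * S x y r + y ^ (r + 1) := S_succ x y r
    have h2 : S x y (r + 1) = y * S x y r + x ^ (r + 1) := by
      rw [S_comm x y, S_succ, S_comm y x]
    have h3 : S x y (2 * (r + 1)) = x ^ (r + 2) * S x y r + y ^ (r + 1) * S x y (r + 1) := by
      have h : 2 * (r + 1) = r + (r + 1) + 1 := by omega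
      rw [h, S_split]
    have key : S x y (r + 1) ^ 2
        = (x * S x y r + y ^ (r + 1)) * (y * S x y r + x ^ (r + 1)) := by
      rw [← h1, ← h2, sq]
    rw [key]
    simp only [pow_zero, one_mul, Nat.sub_zero]
    rw [h3, h2]
    ring



lemma card_divisors_le_rpow {δ : ℝ} (hδ : 0 < δ) :
    ∃ C : ℝ, 0 < C ∧ ∀ n : ℕ, n ≠ 0 → ((n.divisors.card : ℝ)) ≤ C * (n : ℝ) ^ δ := by
  set u : ℝ := (2 : ℝ) ^ δ with hu_def
  have hu1 : 1 < u := by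
    have := Real.rpow_lt_rpow_left_iff (x := (2:ℝ)) (y := 0) (z := δ) one_lt_two
    simpa [hu_def] using this.mpr hδ
  set M : ℝ := max 1 (1 / (u - 1)) with hM_def
  have hM1 : 1 ≤ M := le_max_left _ _
  have hM0 : 0 < M := lt_of_lt_of_le one_pos hM1
  have hMu : 1 ≤ M * (u - 1) := by
    have h1 : 1 / (u - 1) ≤ M := le_max_right _ _
    have hu0 : 0 < u - 1 := by linarith
    calc (1:ℝ) = (1 / (u - 1)) * (u - 1) := by field_simp
    _ ≤ M * (u - 1) := by apply mul_le_mul_of_nonneg_right h1 hu0.le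
  have claim_small : ∀ r : ℕ, ((r : ℝ) + 1) ≤ M * u ^ r := by
    intro r
    have hb : 1 + (r : ℝ) * (u - 1) ≤ (1 + (u - 1)) ^ r := by
      apply one_add_mul_le_pow
      linarith
    have h1u : (1 : ℝ) + (u - 1) = u := by ring
    rw [h1u] at hb
    have : M * (1 + (r : ℝ) * (u - 1)) ≤ M * u ^ r :=
      mul_le_mul_of_nonneg_left hb hM0.le
    refine le_trans ?_ this
    have : (r : ℝ) * 1 ≤ (r : ℝ) * (M * (u - 1)) :=
      mul_le_mul_of_nonneg_left hMu (Nat.cast_nonneg r)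
    nlinarith [Nat.cast_nonneg (α := ℝ) r]
  set P : ℕ := ⌈(2 : ℝ) ^ (1 / δ)⌉₊ with hP_def
  refine ⟨M ^ P, pow_pos hM0 P, fun n hn => ?_⟩
  have hw : ∀ p ∈ n.primeFactors,
      ((n.factorization p : ℝ) + 1) ≤
        (if p < P then M else 1) * ((p : ℝ) ^ δ) ^ (n.factorization p) := by
    intro p hp
    have hpp : p.Prime := Nat.prime_of_mem_primeFactors hp
    have hp2 : (2 : ℝ) ≤ (p : ℝ) := by exact_mod_cast hpp.two_le
    set r : ℕ := n.factorization p
    have hpδ : (2:ℝ) ^ δ ≤ (p : ℝ) ^ δ := Real.rpow_le_rpow (by norm_num) hp2 hδ.le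
    by_cases hP : p < P
    · rw [if_pos hP]
      refine le_trans (claim_small r) ?_
      apply mul_le_mul_of_nonneg_left _ hM0.le
      exact pow_le_pow_left₀ (Real.rpow_nonneg (by norm_num) δ) hpδ r
    · rw [if_neg hP, one_mul]
      have hpP : ((2 : ℝ) ^ (1 / δ)) ≤ (p : ℝ) := by
        have : P ≤ p := le_of_not_gt hP
        calc ((2:ℝ) ^ (1/δ)) ≤ (P : ℝ) := Nat.le_ceil _
        _ ≤ (p : ℝ) := by exact_mod_cast this
      have h2p : (2 : ℝ) ≤ (p : ℝ) ^ δ := by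
        have := Real.rpow_le_rpow (Real.rpow_nonneg (by norm_num) _) hpP hδ.le
        rwa [← Real.rpow_mul (by norm_num), one_div, inv_mul_cancel₀ (ne_of_gt hδ),
          Real.rpow_one] at this
      have hr2 : ((r : ℝ) + 1) ≤ (2 : ℝ) ^ r := by
        have := Nat.lt_two_pow_self (n := r)
        have : (r : ℝ) + 1 ≤ ((2 ^ r : ℕ) : ℝ) := by exact_mod_cast this
        simpa using this
      exact le_trans hr2 (pow_le_pow_left₀ (by norm_num) h2p r)
  have hcard : ((n.divisors.card : ℝ)) =
      ∏ p ∈ n.primeFactors, ((n.factorization p : ℝ) + 1) := by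
    rw [Nat.card_divisors hn]
    push_cast
    rfl
  have hprod : ∏ p ∈ n.primeFactors, ((p : ℝ) ^ δ) ^ (n.factorization p) = (n : ℝ) ^ δ := by
    have h1 : ∀ p ∈ n.primeFactors,
        ((p : ℝ) ^ δ) ^ (n.factorization p) = (((p ^ n.factorization p : ℕ) : ℝ)) ^ δ := by
      intro p hp
      rw [← Real.rpow_natCast ((p:ℝ) ^ δ) (n.factorization p), ← Real.rpow_mul (by positivity),
        mul_comm, Real.rpow_mul (by positivity), Real.rpow_natCast]
      push_cast
      rfl
    rw [Finset.prod_congr rfl h1, Real.finset_prod_rpow _ _ (fun p _ => by positivity)]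
    congr 1
    rw [← Nat.cast_prod]
    congr 1
    conv_rhs => rw [← Nat.factorization_prod_pow_eq_self hn]
    rfl
  have hWprod : (∏ p ∈ n.primeFactors, (if p < P then M else 1)) ≤ M ^ P := by
    rw [← Finset.prod_filter_mul_prod_filter_not n.primeFactors (· < P)]
    have h2 : ∏ p ∈ n.primeFactors.filter (¬ · < P), (if p < P then M else 1) = 1 := by
      apply Finset.prod_eq_one
      intro p hp
      rw [if_neg (Finset.mem_filter.mp hp).2]
    have h1 : ∏ p ∈ n.primeFactors.filter (· < P), (if p < P then M else 1)
        = M ^ (n.primeFactors.filter (· < P)).card := by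
      rw [Finset.prod_congr rfl (fun p hp => if_pos (Finset.mem_filter.mp hp).2),
        Finset.prod_const]
    rw [h2, h1, mul_one]
    apply pow_le_pow_right₀ hM1
    calc (n.primeFactors.filter (· < P)).card ≤ (Finset.range P).card := by
          apply Finset.card_le_card
          intro p hp
          exact Finset.mem_range.mpr (Finset.mem_filter.mp hp).2
    _ = P := Finset.card_range P
  calc ((n.divisors.card : ℝ)) = ∏ p ∈ n.primeFactors, ((n.factorization p : ℝ) + 1) := hcard
  _ ≤ ∏ p ∈ n.primeFactors, (if p < P then M else 1) * ((p : ℝ) ^ δ) ^ (n.factorization p) := by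
      apply Finset.prod_le_prod (fun p _ => by positivity) hw
  _ = (∏ p ∈ n.primeFactors, (if p < P then M else 1)) *
        ∏ p ∈ n.primeFactors, ((p : ℝ) ^ δ) ^ (n.factorization p) := Finset.prod_mul_distrib
  _ ≤ M ^ P * (n : ℝ) ^ δ := by
      rw [hprod]
      apply mul_le_mul_of_nonneg_right hWprod (by positivity)



section main

variable (k : ℕ) (hk : 1 ≤ k) (α β : ℕ → ℂ) (a : ℕ → ℂ) (ha1 : a 1 = 1)
  (haP : ∀ ℓ : ℕ, ℓ.Prime → ∀ r : ℕ, 1 ≤ r →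
      a (ℓ ^ r) = ∑ i ∈ Finset.range (r + 1), α ℓ ^ i * β ℓ ^ (r - i))
  (haM : ∀ m n : ℕ, 0 < m → 0 < n → Nat.Coprime m n → a (m * n) = a m * a n)
  (Nf : ℕ) (ε : DirichletCharacter ℂ Nf)
  (hαβ : ∀ ℓ : ℕ, ℓ.Prime → α ℓ * β ℓ = ε (ℓ : ZMod Nf) * (ℓ : ℂ) ^ (k - 1))

include haP ha1 in
lemma haP' : ∀ ℓ : ℕ, ℓ.Prime → ∀ r : ℕ, a (ℓ ^ r) = S (α ℓ) (β ℓ) r := by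
  intro ℓ hℓ r
  rcases Nat.eq_zero_or_pos r with rfl | hr
  · rw [pow_zero, ha1, S_zero]
  · rw [haP ℓ hℓ r hr]; rfl

include ha1 haP haM hαβ in
lemma divisor_identity : ∀ n : ℕ, n ≠ 0 →
    a n ^ 2 = ∑ d ∈ n.divisors, ε (d : ZMod Nf) * (d : ℂ) ^ (k - 1) * a ((n / d) ^ 2) := by
  -- arithmetic functions
  set E : ArithmeticFunction ℂ :=
    ⟨fun n => if n = 0 then 0 else ε (n : ZMod Nf) * (n : ℂ) ^ (k - 1), by simp⟩ with hE_def
  set A2 : ArithmeticFunction ℂ :=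
    ⟨fun n => if n = 0 then 0 else a (n ^ 2), by simp⟩ with hA2_def
  set Q : ArithmeticFunction ℂ :=
    ⟨fun n => if n = 0 then 0 else a n ^ 2, by simp⟩ with hQ_def
  have hEapp : ∀ n : ℕ, n ≠ 0 → E n = ε (n : ZMod Nf) * (n : ℂ) ^ (k - 1) := by
    intro n hn; simp [hE_def, ArithmeticFunction.coe_mk, hn]
  have hA2app : ∀ n : ℕ, n ≠ 0 → A2 n = a (n ^ 2) := by
    intro n hn; simp [hA2_def, ArithmeticFunction.coe_mk, hn]
  have hQapp : ∀ n : ℕ, n ≠ 0 → Q n = a n ^ 2 := by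
    intro n hn; simp [hQ_def, ArithmeticFunction.coe_mk, hn]
  have hE : E.IsMultiplicative := by
    constructor
    · rw [hEapp 1 one_ne_zero]; simp
    · intro m n hmn
      rcases eq_or_ne m 0 with rfl | hm
      · have : n = 1 := (Nat.coprime_zero_left n).mp hmn
        subst this; simp [hE_def, ArithmeticFunction.coe_mk]
      rcases eq_or_ne n 0 with rfl | hn
      · simp [hE_def, ArithmeticFunction.coe_mk]
      rw [hEapp m hm, hEapp n hn, hEapp (m * n) (Nat.mul_ne_zero hm hn)]
      push_cast
      rw [map_mul, mul_pow]
      ring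
  have hA2m : A2.IsMultiplicative := by
    constructor
    · rw [hA2app 1 one_ne_zero]; simpa using ha1
    · intro m n hmn
      rcases eq_or_ne m 0 with rfl | hm
      · have : n = 1 := (Nat.coprime_zero_left n).mp hmn
        subst this; simp [hA2_def, ArithmeticFunction.coe_mk]
      rcases eq_or_ne n 0 with rfl | hn
      · simp [hA2_def, ArithmeticFunction.coe_mk]
      rw [hA2app m hm, hA2app n hn, hA2app (m * n) (Nat.mul_ne_zero hm hn), mul_pow]
      exact haM _ _ (by positivity) (by positivity) (Nat.Coprime.pow _ _ hmn)
  have hQm : Q.IsMultiplicative := by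
    constructor
    · rw [hQapp 1 one_ne_zero, ha1]; simp
    · intro m n hmn
      rcases eq_or_ne m 0 with rfl | hm
      · have : n = 1 := (Nat.coprime_zero_left n).mp hmn
        subst this; simp [hQ_def, ArithmeticFunction.coe_mk]
      rcases eq_or_ne n 0 with rfl | hn
      · simp [hQ_def, ArithmeticFunction.coe_mk]
      rw [hQapp m hm, hQapp n hn, hQapp (m * n) (Nat.mul_ne_zero hm hn),
        haM m n (Nat.pos_of_ne_zero hm) (Nat.pos_of_ne_zero hn) hmn]
      ring
  have hQE : Q = E * A2 := by
    rw [ArithmeticFunction.IsMultiplicative.eq_iff_eq_on_prime_powers Q hQm _ (hE.mul hA2m)]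
    intro p i hp
    have hp0 : p ≠ 0 := hp.ne_zero
    have hppow : ∀ j : ℕ, p ^ j ≠ 0 := fun j => pow_ne_zero j hp0
    rw [hQapp _ (hppow i), ArithmeticFunction.mul_apply]
    rw [Nat.sum_divisorsAntidiagonal (f := fun d e => E d * A2 e)]
    rw [Nat.sum_divisors_prime_pow hp]
    have hterm : ∀ j ∈ Finset.range (i + 1),
        E (p ^ j) * A2 (p ^ i / p ^ j)
          = (α p * β p) ^ j * S (α p) (β p) (2 * (i - j)) := by
      intro j hj
      have hji : j ≤ i := by simpa [Nat.lt_succ_iff] using hj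
      rw [Nat.pow_div hji hp.pos, hEapp _ (hppow j), hA2app _ (hppow (i - j)),
        ← pow_mul, mul_comm (i - j) 2, haP' α β a ha1 haP p hp (2 * (i - j))]
      congr 1
      rw [hαβ p hp]
      push_cast
      rw [map_pow, mul_pow, ← pow_mul, mul_comm j (k-1), pow_mul]
    rw [Finset.sum_congr rfl hterm, ← S_sq, haP' α β a ha1 haP p hp i]
  intro n hn
  have h1 : a n ^ 2 = Q n := (hQapp n hn).symm
  rw [h1, hQE, ArithmeticFunction.mul_apply,
    Nat.sum_divisorsAntidiagonal (f := fun d e => E d * A2 e)]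
  refine Finset.sum_congr rfl fun d hd => ?_
  have hd0 : d ≠ 0 := (Nat.pos_of_mem_divisors hd).ne'
  have hnd0 : n / d ≠ 0 := by
    have := Nat.div_pos (Nat.le_of_dvd (Nat.pos_of_ne_zero hn) (Nat.dvd_of_mem_divisors hd))
      (Nat.pos_of_mem_divisors hd)
    exact this.ne'
  rw [hEapp d hd0, hA2app _ hnd0]

end main


section bound

variable (k : ℕ) (α β : ℕ → ℂ)
  (hα : ∀ ℓ : ℕ, ℓ.Prime → ‖α ℓ‖ ≤ (ℓ : ℝ) ^ (((k : ℝ) - 1) / 2))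
  (hβ : ∀ ℓ : ℕ, ℓ.Prime → ‖β ℓ‖ ≤ (ℓ : ℝ) ^ (((k : ℝ) - 1) / 2))
  (a : ℕ → ℂ) (ha1 : a 1 = 1)
  (haP : ∀ ℓ : ℕ, ℓ.Prime → ∀ r : ℕ, 1 ≤ r →
      a (ℓ ^ r) = ∑ i ∈ Finset.range (r + 1), α ℓ ^ i * β ℓ ^ (r - i))
  (haM : ∀ m n : ℕ, 0 < m → 0 < n → Nat.Coprime m n → a (m * n) = a m * a n)

include hα hβ ha1 haP haM in
lemma abs_a_le : ∀ n : ℕ, n ≠ 0 →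
    ‖a n‖ ≤ (n.divisors.card : ℝ) * (n : ℝ) ^ (((k : ℝ) - 1) / 2) := by
  intro n
  induction n using Nat.recOnPosPrimePosCoprime with
  | prime_pow p r hp hr =>
    intro _
    rw [haP p hp r hr]
    have hd : ((p ^ r).divisors.card : ℝ) = r + 1 := by
      rw [Nat.divisors_prime_pow hp, Finset.card_map, Finset.card_range]
      push_cast; ring
    have hterm : ∀ i ∈ Finset.range (r + 1),
        ‖α p ^ i * β p ^ (r - i)‖ ≤ ((p : ℝ) ^ (((k:ℝ)-1)/2)) ^ r := by
      intro i hi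
      have hi' : i ≤ r := by simpa [Nat.lt_succ_iff] using hi
      rw [norm_mul, norm_pow, norm_pow]
      have h1 : ‖α p‖ ^ i ≤ ((p : ℝ) ^ (((k:ℝ)-1)/2)) ^ i :=
        pow_le_pow_left₀ (norm_nonneg _) (hα p hp) i
      have h2 : ‖β p‖ ^ (r - i) ≤ ((p : ℝ) ^ (((k:ℝ)-1)/2)) ^ (r - i) :=
        pow_le_pow_left₀ (norm_nonneg _) (hβ p hp) (r - i)
      calc ‖α p‖ ^ i * ‖β p‖ ^ (r - i)
          ≤ ((p : ℝ) ^ (((k:ℝ)-1)/2)) ^ i * ((p : ℝ) ^ (((k:ℝ)-1)/2)) ^ (r - i) := by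
            apply mul_le_mul h1 h2 (by positivity) (by positivity)
      _ = ((p : ℝ) ^ (((k:ℝ)-1)/2)) ^ r := by
            rw [← pow_add]
            congr 1
            omega
    calc ‖∑ i ∈ Finset.range (r + 1), α p ^ i * β p ^ (r - i)‖
        ≤ ∑ i ∈ Finset.range (r + 1), ‖α p ^ i * β p ^ (r - i)‖ :=
          norm_sum_le _ _
    _ ≤ ∑ i ∈ Finset.range (r + 1), ((p : ℝ) ^ (((k:ℝ)-1)/2)) ^ r :=
          Finset.sum_le_sum hterm
    _ = (r + 1 : ℝ) * ((p : ℝ) ^ (((k:ℝ)-1)/2)) ^ r := by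
          rw [Finset.sum_const, Finset.card_range]; push_cast; ring
    _ = ((p ^ r).divisors.card : ℝ) * ((p ^ r : ℕ) : ℝ) ^ (((k:ℝ)-1)/2) := by
          rw [hd]
          congr 1
          rw [← Real.rpow_natCast ((p:ℝ) ^ (((k:ℝ)-1)/2)) r, ← Real.rpow_mul (by positivity),
            mul_comm, Real.rpow_mul (by positivity), Real.rpow_natCast]
          push_cast
          rfl
  | zero => intro h; exact absurd rfl h
  | one =>
    intro _
    rw [ha1]
    simp
  | coprime m n hm hn hmn ihm ihn =>
    intro _
    have hm0 : m ≠ 0 := by omega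
    have hn0 : n ≠ 0 := by omega
    rw [haM m n (by omega) (by omega) hmn, norm_mul]
    have := mul_le_mul (ihm hm0) (ihn hn0) (norm_nonneg _)
      (by positivity)
    refine le_trans this (le_of_eq ?_)
    rw [Nat.Coprime.card_divisors_mul hmn]
    push_cast
    rw [Real.mul_rpow (by positivity) (by positivity)]
    ring

end bound
lemma summable_norm_term {f : ℕ → ℂ} {s : ℂ} {x C : ℝ} (hx : x + 1 < s.re)
    (hC : ∀ n : ℕ, n ≠ 0 → ‖f n‖ ≤ C * (n : ℝ) ^ x) :
    Summable fun n : ℕ => ‖LSeries.term f s n‖ := by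
  have hsum : Summable fun n : ℕ => C * (n : ℝ) ^ (x - s.re) :=
    (Real.summable_nat_rpow.mpr (by linarith)).mul_left C
  refine Summable.of_nonneg_of_le (fun n => norm_nonneg _) (fun n => ?_) hsum
  rcases eq_or_ne n 0 with rfl | hn
  · rw [LSeries.term_zero, norm_zero, Nat.cast_zero, Real.zero_rpow (by intro h; linarith)]
    simp
  · have hn0 : (0 : ℝ) < (n : ℝ) := by
      exact_mod_cast Nat.pos_of_ne_zero hn
    rw [LSeries.norm_term_eq, if_neg hn, div_le_iff₀ (Real.rpow_pos_of_pos hn0 _)]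
    calc ‖f n‖ ≤ C * (n : ℝ) ^ x := hC n hn
    _ = C * (n : ℝ) ^ (x - s.re) * (n : ℝ) ^ s.re := by
        rw [mul_assoc, ← Real.rpow_add hn0]
        ring_nf


lemma summable_pnat {f : ℕ → ℝ} (hf : Summable f) : Summable fun n : ℕ+ => f n :=
  hf.comp_injective PNat.coe_injective

lemma tsum_pnat' {f : ℕ → ℂ} (hf : f 0 = 0) : ∑' n : ℕ+, f n = ∑' n : ℕ, f n := by
  have h : Function.support f ⊆ {n : ℕ | 0 < n} := by
    intro x hx
    simp only [Set.mem_setOf_eq]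
    rcases Nat.eq_zero_or_pos x with rfl | hp
    · exact absurd hf hx
    · exact hp
  exact tsum_subtype_eq_of_support_subset h



end SymmSqAux

open SymmSqAux in
/-- With `a` the multiplicative function with Hecke-type values at prime
powers and Dirichlet characters `ε`, `χ`, for `Re(s) > k` the three Dirichlet series
converge absolutely and
`(∑_{m≥1} χ(m)ε(m) m^{k−1−s}) · (∑_{n≥1} a(n²)χ(n) n^{−s}) = ∑_{n≥1} a(n)²χ(n) n^{−s}`. -/
theorem symm_square_dirichlet_series_identity
    (k : ℕ) (hk : 1 ≤ k)
    (α β : ℕ → ℂ)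
    (hα : ∀ ℓ : ℕ, ℓ.Prime → ‖α ℓ‖ ≤ (ℓ : ℝ) ^ (((k : ℝ) - 1) / 2))
    (hβ : ∀ ℓ : ℕ, ℓ.Prime → ‖β ℓ‖ ≤ (ℓ : ℝ) ^ (((k : ℝ) - 1) / 2))
    (a : ℕ → ℂ) (ha1 : a 1 = 1)
    (haP : ∀ ℓ : ℕ, ℓ.Prime → ∀ r : ℕ, 1 ≤ r →
      a (ℓ ^ r) = ∑ i ∈ Finset.range (r + 1), α ℓ ^ i * β ℓ ^ (r - i))
    (haM : ∀ m n : ℕ, 0 < m → 0 < n → Nat.Coprime m n → a (m * n) = a m * a n)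
    (Nf Nχ : ℕ) (ε : DirichletCharacter ℂ Nf) (χ : DirichletCharacter ℂ Nχ)
    (hαβ : ∀ ℓ : ℕ, ℓ.Prime → α ℓ * β ℓ = ε (ℓ : ZMod Nf) * (ℓ : ℂ) ^ (k - 1))
    (s : ℂ) (hs : (k : ℝ) < s.re) :
    Summable (fun m : ℕ+ =>
      ‖χ ((m : ℕ) : ZMod Nχ) * ε ((m : ℕ) : ZMod Nf) *
        ((m : ℕ) : ℂ) ^ ((k : ℂ) - 1 - s)‖) ∧
    Summable (fun n : ℕ+ =>
      ‖a ((n : ℕ) ^ 2) * χ ((n : ℕ) : ZMod Nχ) * ((n : ℕ) : ℂ) ^ (-s)‖) ∧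
    Summable (fun n : ℕ+ =>
      ‖a (n : ℕ) ^ 2 * χ ((n : ℕ) : ZMod Nχ) * ((n : ℕ) : ℂ) ^ (-s)‖) ∧
    (∑' m : ℕ+, χ ((m : ℕ) : ZMod Nχ) * ε ((m : ℕ) : ZMod Nf) *
        ((m : ℕ) : ℂ) ^ ((k : ℂ) - 1 - s)) *
      (∑' n : ℕ+, a ((n : ℕ) ^ 2) * χ ((n : ℕ) : ZMod Nχ) * ((n : ℕ) : ℂ) ^ (-s)) =
    ∑' n : ℕ+, a (n : ℕ) ^ 2 * χ ((n : ℕ) : ZMod Nχ) * ((n : ℕ) : ℂ) ^ (-s) := by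
  classical
  set F : ℕ → ℂ := fun n => χ ((n : ℕ) : ZMod Nχ) * ε ((n : ℕ) : ZMod Nf) * (n : ℂ) ^ (k - 1)
    with hF_def
  set G : ℕ → ℂ := fun n => a (n ^ 2) * χ ((n : ℕ) : ZMod Nχ) with hG_def
  set H : ℕ → ℂ := LSeries.convolution F G with hH_def
  have hdiv := divisor_identity k α β a ha1 haP haM Nf ε hαβ
  have habs := abs_a_le k α β hα hβ a ha1 haP haM
  -- the convolution identity
  have hFG : ∀ n : ℕ, n ≠ 0 → H n = a n ^ 2 * χ ((n : ℕ) : ZMod Nχ) := by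
    intro n hn
    rw [hH_def, LSeries.convolution_def]
    simp only
    rw [Nat.sum_divisorsAntidiagonal (f := fun d e => F d * G e)]
    have hterm : ∀ d ∈ n.divisors, F d * G (n / d)
        = χ ((n : ℕ) : ZMod Nχ) * (ε (d : ZMod Nf) * (d : ℂ) ^ (k - 1) * a ((n / d) ^ 2)) := by
      intro d hd
      obtain ⟨hdvd, hn0⟩ := Nat.mem_divisors.mp hd
      have hmul : d * (n / d) = n := Nat.mul_div_cancel' hdvd
      have hχ : χ ((d : ℕ) : ZMod Nχ) * χ (((n / d) : ℕ) : ZMod Nχ) = χ ((n : ℕ) : ZMod Nχ) := by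
        rw [← map_mul, ← Nat.cast_mul, hmul]
      rw [hF_def, hG_def]
      simp only
      rw [← hχ]
      ring
    rw [Finset.sum_congr rfl hterm, ← Finset.mul_sum, ← hdiv n hn]
    ring
  -- exponents
  set δ : ℝ := (s.re - k) / 4 with hδ_def
  have hδ : 0 < δ := by rw [hδ_def]; linarith
  obtain ⟨C, hC0, hC⟩ := card_divisors_le_rpow hδ
  have hk1 : (0 : ℝ) ≤ (k : ℝ) - 1 := by
    have : (1 : ℝ) ≤ (k : ℝ) := by exact_mod_cast hk
    linarith
  -- norm bounds
  have hFb : ∀ n : ℕ, n ≠ 0 → ‖F n‖ ≤ 1 * (n : ℝ) ^ ((k : ℝ) - 1) := by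
    intro n hn
    have hnpow : ‖(n : ℂ) ^ (k - 1)‖ = (n : ℝ) ^ ((k : ℝ) - 1) := by
      rw [norm_pow, Complex.norm_natCast, ← Real.rpow_natCast (n : ℝ) (k - 1)]
      congr 1
      rw [Nat.cast_sub hk, Nat.cast_one]
    rw [hF_def]
    simp only
    rw [norm_mul, norm_mul, hnpow, one_mul]
    have h1 : ‖χ ((n : ℕ) : ZMod Nχ)‖ ≤ 1 := χ.norm_le_one _
    have h2 : ‖ε ((n : ℕ) : ZMod Nf)‖ ≤ 1 := ε.norm_le_one _
    have hge : (0:ℝ) ≤ (n : ℝ) ^ ((k : ℝ) - 1) := Real.rpow_nonneg (Nat.cast_nonneg n) _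
    calc ‖χ ((n : ℕ) : ZMod Nχ)‖ * ‖ε ((n : ℕ) : ZMod Nf)‖ * ((n : ℝ) ^ ((k : ℝ) - 1))
        ≤ 1 * 1 * ((n : ℝ) ^ ((k : ℝ) - 1)) := by
          apply mul_le_mul (mul_le_mul h1 h2 (norm_nonneg _) zero_le_one) le_rfl hge
          norm_num
    _ = (n : ℝ) ^ ((k : ℝ) - 1) := by ring
  have habs2 : ∀ n : ℕ, n ≠ 0 → ‖a (n ^ 2)‖ ≤ C * (n : ℝ) ^ ((k : ℝ) - 1 + 2 * δ) := by
    intro n hn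
    have hn2 : n ^ 2 ≠ 0 := pow_ne_zero 2 hn
    have hnR : (0 : ℝ) < (n : ℝ) := by exact_mod_cast Nat.pos_of_ne_zero hn
    have h1 : ‖a (n ^ 2)‖ ≤ ((n ^ 2).divisors.card : ℝ) * ((n ^ 2 : ℕ) : ℝ) ^ (((k : ℝ) - 1) / 2) := by
      exact habs (n ^ 2) hn2
    have h2 : ((n ^ 2).divisors.card : ℝ) ≤ C * ((n ^ 2 : ℕ) : ℝ) ^ δ := hC _ hn2
    have hcast : ((n ^ 2 : ℕ) : ℝ) = (n : ℝ) ^ (2 : ℝ) := by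
      rw [show ((2:ℝ)) = ((2:ℕ):ℝ) by norm_num, Real.rpow_natCast]
      push_cast
      ring
    have h3 : ((n ^ 2 : ℕ) : ℝ) ^ δ = (n : ℝ) ^ (2 * δ) := by
      rw [hcast, ← Real.rpow_mul hnR.le]
    have h4 : ((n ^ 2 : ℕ) : ℝ) ^ (((k : ℝ) - 1) / 2) = (n : ℝ) ^ ((k : ℝ) - 1) := by
      rw [hcast, ← Real.rpow_mul hnR.le]
      congr 1
      ring
    calc ‖a (n ^ 2)‖ ≤ ((n ^ 2).divisors.card : ℝ) * ((n ^ 2 : ℕ) : ℝ) ^ (((k : ℝ) - 1) / 2) := h1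
    _ ≤ (C * ((n ^ 2 : ℕ) : ℝ) ^ δ) * ((n ^ 2 : ℕ) : ℝ) ^ (((k : ℝ) - 1) / 2) := by
        apply mul_le_mul_of_nonneg_right h2 (Real.rpow_nonneg (Nat.cast_nonneg _) _)
    _ = C * (n : ℝ) ^ ((k : ℝ) - 1 + 2 * δ) := by
        rw [h3, h4, Real.rpow_add hnR, mul_assoc]
        ring
  have hGb : ∀ n : ℕ, n ≠ 0 → ‖G n‖ ≤ C * (n : ℝ) ^ ((k : ℝ) - 1 + 2 * δ) := by
    intro n hn
    rw [hG_def]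
    simp only
    rw [norm_mul]
    calc ‖a (n ^ 2)‖ * ‖χ ((n : ℕ) : ZMod Nχ)‖ ≤ (C * (n : ℝ) ^ ((k : ℝ) - 1 + 2 * δ)) * 1 := by
          apply mul_le_mul (habs2 n hn) (χ.norm_le_one _) (norm_nonneg _)
          have : (0:ℝ) ≤ (n:ℝ) ^ ((k : ℝ) - 1 + 2*δ) := Real.rpow_nonneg (Nat.cast_nonneg n) _
          positivity
    _ = C * (n : ℝ) ^ ((k : ℝ) - 1 + 2 * δ) := by ring
  have hHb : ∀ n : ℕ, n ≠ 0 → ‖H n‖ ≤ C ^ 2 * (n : ℝ) ^ ((k : ℝ) - 1 + 2 * δ) := by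
    intro n hn
    have hnR : (0 : ℝ) < (n : ℝ) := by exact_mod_cast Nat.pos_of_ne_zero hn
    rw [hFG n hn, norm_mul, norm_pow]
    have h1 : ‖a n‖ ≤ C * (n : ℝ) ^ (δ + ((k : ℝ) - 1) / 2) := by
      calc ‖a n‖ ≤ (n.divisors.card : ℝ) * (n : ℝ) ^ (((k : ℝ) - 1) / 2) := by
            exact habs n hn
      _ ≤ (C * (n : ℝ) ^ δ) * (n : ℝ) ^ (((k : ℝ) - 1) / 2) := by
            apply mul_le_mul_of_nonneg_right (hC n hn) (Real.rpow_nonneg (Nat.cast_nonneg _) _)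
      _ = C * (n : ℝ) ^ (δ + ((k : ℝ) - 1) / 2) := by
            rw [Real.rpow_add hnR, mul_assoc]
    have h2 : ‖a n‖ ^ 2 ≤ (C * (n : ℝ) ^ (δ + ((k : ℝ) - 1) / 2)) ^ 2 :=
      pow_le_pow_left₀ (norm_nonneg _) h1 2
    calc ‖a n‖ ^ 2 * ‖χ ((n : ℕ) : ZMod Nχ)‖
        ≤ (C * (n : ℝ) ^ (δ + ((k : ℝ) - 1) / 2)) ^ 2 * 1 := by
          apply mul_le_mul h2 (χ.norm_le_one _) (norm_nonneg _) (by positivity)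
    _ = C ^ 2 * (n : ℝ) ^ ((k : ℝ) - 1 + 2 * δ) := by
        rw [mul_pow, ← Real.rpow_natCast ((n:ℝ) ^ (δ + ((k : ℝ) - 1) / 2)) 2,
          ← Real.rpow_mul hnR.le, mul_one]
        congr 2
        push_cast
        ring
  -- summability of terms over ℕ
  have hexp : ((k : ℝ) - 1 + 2 * δ) + 1 < s.re := by
    rw [hδ_def]; linarith
  have hSF : Summable fun n : ℕ => ‖LSeries.term F s n‖ :=
    summable_norm_term (by linarith : ((k:ℝ) - 1) + 1 < s.re) hFb
  have hSG : Summable fun n : ℕ => ‖LSeries.term G s n‖ := summable_norm_term hexp hGb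
  have hSH : Summable fun n : ℕ => ‖LSeries.term H s n‖ := summable_norm_term hexp hHb
  -- term values at positive integers
  have hcpow : ∀ n : ℕ+, ((n : ℕ) : ℂ) ^ ((k : ℂ) - 1 - s)
      = ((n : ℕ) : ℂ) ^ (k - 1) * ((n : ℕ) : ℂ) ^ (-s) := by
    intro n
    have hn0 : ((n : ℕ) : ℂ) ≠ 0 := by
      exact_mod_cast (Nat.cast_ne_zero (R := ℂ)).mpr n.ne_zero
    have he : (k : ℂ) - 1 - s = ((k - 1 : ℕ) : ℂ) + (-s) := by
      rw [Nat.cast_sub hk]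
      push_cast
      ring
    rw [he, Complex.cpow_add _ _ hn0, Complex.cpow_natCast]
  have heqF : ∀ n : ℕ+, LSeries.term F s n
      = χ ((n : ℕ) : ZMod Nχ) * ε ((n : ℕ) : ZMod Nf) * ((n : ℕ) : ℂ) ^ ((k : ℂ) - 1 - s) := by
    intro n
    rw [LSeries.term_of_ne_zero n.ne_zero, hcpow n, hF_def]
    simp only
    rw [div_eq_mul_inv, ← Complex.cpow_neg]
    ring
  have heqG : ∀ n : ℕ+, LSeries.term G s n
      = a ((n : ℕ) ^ 2) * χ ((n : ℕ) : ZMod Nχ) * ((n : ℕ) : ℂ) ^ (-s) := by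
    intro n
    rw [LSeries.term_of_ne_zero n.ne_zero, hG_def]
    simp only
    rw [div_eq_mul_inv, ← Complex.cpow_neg]
  have heqH : ∀ n : ℕ+, LSeries.term H s n
      = a ((n : ℕ)) ^ 2 * χ ((n : ℕ) : ZMod Nχ) * ((n : ℕ) : ℂ) ^ (-s) := by
    intro n
    rw [LSeries.term_of_ne_zero n.ne_zero, hFG _ n.ne_zero, div_eq_mul_inv, ← Complex.cpow_neg]
  refine ⟨?_, ?_, ?_, ?_⟩
  · exact (summable_pnat hSF).congr fun n => by rw [heqF n]
  · exact (summable_pnat hSG).congr fun n => by rw [heqG n]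
  · exact (summable_pnat hSH).congr fun n => by rw [heqH n]
  · have hLF : (∑' m : ℕ+, χ ((m : ℕ) : ZMod Nχ) * ε ((m : ℕ) : ZMod Nf) *
        ((m : ℕ) : ℂ) ^ ((k : ℂ) - 1 - s)) = LSeries F s := by
      rw [LSeries]
      rw [← tsum_pnat' (LSeries.term_zero F s)]
      exact tsum_congr fun n => (heqF n).symm
    have hLG : (∑' n : ℕ+, a ((n : ℕ) ^ 2) * χ ((n : ℕ) : ZMod Nχ) * ((n : ℕ) : ℂ) ^ (-s))
        = LSeries G s := by
      rw [LSeries, ← tsum_pnat' (LSeries.term_zero G s)]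
      exact tsum_congr fun n => (heqG n).symm
    have hLH : (∑' n : ℕ+, a ((n : ℕ)) ^ 2 * χ ((n : ℕ) : ZMod Nχ) * ((n : ℕ) : ℂ) ^ (-s))
        = LSeries H s := by
      rw [LSeries, ← tsum_pnat' (LSeries.term_zero H s)]
      exact tsum_congr fun n => (heqH n).symm
    rw [hLF, hLG, hLH, hH_def]
    exact (LSeries_convolution' (hSF.of_norm) (hSG.of_norm)).symm
end

section
/- For every s ∈ ℂ with Re(s) > k, the family of local factors ℓ ↦ [(1 − χ(ℓ)α_ℓ² ℓ^{−s})(1 − χ(ℓ)α_ℓβ_ℓ ℓ^{−s})(1 − χ(ℓ)β_ℓ² ℓ^{−s})]^{−1}, indexed by primes ℓ, is multipliable, and its product satisfies ∏_ℓ [(1 − χ(ℓ)α_ℓ² ℓ^{−s})(1 − χ(ℓ)α_ℓβ_ℓ ℓ^{−s})(1 − χ(ℓ)β_ℓ² ℓ^{−s})]^{−1} = (∑_{m≥1} χ(m)²ε(m)² m^{2k−2−2s}) · (∑_{n≥1} a(n²) χ(n) n^{−s}), both series on the right converging absolutely. (This is the paper's formula L^imp(Sym² f, χ, s) = L_{N_f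 N_χ}(χ²ε², 2s−2k+2) ∑_{n≥1} a_{n²}(f)χ(n)n^{−s}.) -/
open Finset ArithmeticFunction
noncomputable section SymSqAux
def rpowAF (t : ℝ) : ArithmeticFunction ℝ :=
  ⟨fun n => if n = 0 then 0 else (n : ℝ) ^ t, if_pos rfl⟩
lemma rpowAF_apply (t : ℝ) (n : ℕ) : rpowAF t n = if n = 0 then 0 else (n : ℝ) ^ t := rfl
lemma rpowAF_apply_ne (t : ℝ) {n : ℕ} (hn : n ≠ 0) : rpowAF t n = (n : ℝ) ^ t := if_neg hn
lemma rpowAF_nonneg (t : ℝ) (n : ℕ) : 0 ≤ rpowAF t n := by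
  rw [rpowAF_apply]; split <;> positivity

/-- prime power value of `rpowAF`. -/
lemma rpowAF_pp {t : ℝ} {p : ℕ} (hp : p ≠ 0) (i : ℕ) :
    rpowAF t (p ^ i) = (p : ℝ) ^ ((i : ℝ) * t) := by
  rw [rpowAF_apply_ne t (pow_ne_zero i hp), Nat.cast_pow, ← Real.rpow_natCast (p : ℝ) i,
    ← Real.rpow_mul (Nat.cast_nonneg p)]

/-- value of a double convolution at a prime power. -/
lemma GG_pp {t : ℝ} {p : ℕ} (hp : p.Prime) (e : ℕ) :
    (rpowAF t * rpowAF t) (p ^ e) = (e + 1 : ℝ) * (p : ℝ) ^ ((e : ℝ) * t) := by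
  rw [ArithmeticFunction.mul_apply,
    Nat.sum_divisorsAntidiagonal (fun d m => rpowAF t d * rpowAF t m),
    Nat.sum_divisors_prime_pow hp]
  have h : ∀ i ∈ range (e + 1),
      rpowAF t (p ^ i) * rpowAF t (p ^ e / p ^ i) = (p : ℝ) ^ ((e : ℝ) * t) := by
    intro i hi
    have hie : i ≤ e := Nat.lt_succ_iff.mp (Finset.mem_range.mp hi)
    rw [Nat.pow_div hie hp.pos, rpowAF_pp hp.ne_zero, rpowAF_pp hp.ne_zero,
      ← Real.rpow_add (by exact_mod_cast hp.pos)]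
    congr 1
    have : ((e - i : ℕ) : ℝ) = (e : ℝ) - (i : ℝ) := by
      rw [Nat.cast_sub hie]
    rw [this]; ring
  rw [Finset.sum_congr rfl h, Finset.sum_const, card_range, nsmul_eq_mul]
  push_cast; ring

lemma sum_range_sub_add_one_ge (e : ℕ) : 2 * e + 1 ≤ ∑ i ∈ range (e + 1), (e - i + 1) := by
  induction e with
  | zero => simp
  | succ e ih =>
      rw [Finset.sum_range_succ]
      have h2 : ∑ i ∈ range (e + 1), ((e - i + 1) + 1) ≤ ∑ i ∈ range (e + 1), (e + 1 - i + 1) := by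
        refine Finset.sum_le_sum fun i hi => ?_
        have := Finset.mem_range.mp hi
        omega
      have h3 : ∑ i ∈ range (e + 1), ((e - i + 1) + 1)
          = ∑ i ∈ range (e + 1), (e - i + 1) + (e + 1) := by
        rw [Finset.sum_add_distrib, Finset.sum_const, card_range, smul_eq_mul, mul_one]
      omega

/-- the triple convolution. -/
def T3 (t : ℝ) : ArithmeticFunction ℝ := rpowAF t * (rpowAF t * rpowAF t)

lemma T3_pp_ge {t : ℝ} (ht : 0 ≤ t) {p : ℕ} (hp : p.Prime) (e : ℕ) :
    (2 * e + 1 : ℝ) * (p : ℝ) ^ ((e : ℝ) * t) ≤ T3 t (p ^ e) := by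
  have hppos : (0 : ℝ) < p := by exact_mod_cast hp.pos
  rw [T3, ArithmeticFunction.mul_apply,
    Nat.sum_divisorsAntidiagonal (fun d m => rpowAF t d * (rpowAF t * rpowAF t) m),
    Nat.sum_divisors_prime_pow hp]
  have h : ∀ i ∈ range (e + 1),
      rpowAF t (p ^ i) * (rpowAF t * rpowAF t) (p ^ e / p ^ i)
        = ((e - i : ℕ) + 1 : ℝ) * (p : ℝ) ^ ((e : ℝ) * t) := by
    intro i hi
    have hie : i ≤ e := Nat.lt_succ_iff.mp (Finset.mem_range.mp hi)
    rw [Nat.pow_div hie hp.pos, rpowAF_pp hp.ne_zero, GG_pp hp,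
      show ((e - i : ℕ) : ℝ) = (e : ℝ) - i from by rw [Nat.cast_sub hie]]
    rw [← mul_assoc, mul_comm ((p:ℝ) ^ ((i:ℝ)*t)) _, mul_assoc, ← Real.rpow_add hppos]
    ring_nf
  rw [Finset.sum_congr rfl h, ← Finset.sum_mul]
  have hpow : (0:ℝ) < (p : ℝ) ^ ((e : ℝ) * t) := Real.rpow_pos_of_pos hppos _
  refine mul_le_mul_of_nonneg_right ?_ hpow.le
  -- ∑ i in range (e+1), ((e - i) + 1) ≥ 2e+1
  have : ∀ i ∈ range (e + 1), ((e - i : ℕ) + 1 : ℝ) = (((e - i) + 1 : ℕ) : ℝ) := by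
    intro i _; push_cast; ring
  rw [Finset.sum_congr rfl this, ← Nat.cast_sum]
  have hnat := sum_range_sub_add_one_ge e
  exact_mod_cast hnat

lemma T3_nonneg (t : ℝ) (n : ℕ) : 0 ≤ T3 t n := by
  rw [T3, ArithmeticFunction.mul_apply]
  refine Finset.sum_nonneg fun x _ => mul_nonneg (rpowAF_nonneg _ _) ?_
  rw [ArithmeticFunction.mul_apply]
  exact Finset.sum_nonneg fun y _ => mul_nonneg (rpowAF_nonneg _ _) (rpowAF_nonneg _ _)

/-- twisting a convolution by a completely multiplicative weight. -/
lemma conv_pmul_rpowAF (f g : ArithmeticFunction ℝ) (u : ℝ) :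
    (f * g).pmul (rpowAF u) = (f.pmul (rpowAF u)) * (g.pmul (rpowAF u)) := by
  ext n
  rw [ArithmeticFunction.pmul_apply, ArithmeticFunction.mul_apply,
    ArithmeticFunction.mul_apply, Finset.sum_mul]
  refine Finset.sum_congr rfl fun x hx => ?_
  obtain ⟨hprod, hne⟩ := Nat.mem_divisorsAntidiagonal.mp hx
  have h1 : x.1 ≠ 0 := by intro h; exact hne (by rw [← hprod, h, zero_mul])
  have h2 : x.2 ≠ 0 := by intro h; exact hne (by rw [← hprod, h, mul_zero])
  rw [ArithmeticFunction.pmul_apply, ArithmeticFunction.pmul_apply, ← hprod,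
    rpowAF_apply_ne u h1, rpowAF_apply_ne u h2, rpowAF_apply_ne u (Nat.mul_ne_zero h1 h2),
    Nat.cast_mul, Real.mul_rpow (Nat.cast_nonneg _) (Nat.cast_nonneg _)]
  ring

lemma rpowAF_pmul (t u : ℝ) : (rpowAF t).pmul (rpowAF u) = rpowAF (t + u) := by
  ext n
  rcases eq_or_ne n 0 with rfl | hn
  · simp [rpowAF_apply]
  · rw [ArithmeticFunction.pmul_apply, rpowAF_apply_ne _ hn, rpowAF_apply_ne _ hn,
      rpowAF_apply_ne _ hn, ← Real.rpow_add (by exact_mod_cast Nat.pos_of_ne_zero hn)]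

lemma T3_twist (t u : ℝ) (n : ℕ) : T3 t n * rpowAF u n = T3 (t + u) n := by
  have : (T3 t).pmul (rpowAF u) = T3 (t + u) := by
    rw [T3, conv_pmul_rpowAF, conv_pmul_rpowAF, rpowAF_pmul, T3]
  calc T3 t n * rpowAF u n = ((T3 t).pmul (rpowAF u)) n := by
        rw [ArithmeticFunction.pmul_apply]
    _ = T3 (t + u) n := by rw [this]

lemma rpowAF_mult (t : ℝ) : (rpowAF t).IsMultiplicative := by
  constructor
  · simp [rpowAF_apply]
  · intro m n _
    rcases eq_or_ne m 0 with rfl | hm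
    · simp [rpowAF_apply]
    rcases eq_or_ne n 0 with rfl | hn
    · simp [rpowAF_apply]
    rw [rpowAF_apply_ne t hm, rpowAF_apply_ne t hn, rpowAF_apply_ne t (Nat.mul_ne_zero hm hn),
      Nat.cast_mul, Real.mul_rpow (Nat.cast_nonneg m) (Nat.cast_nonneg n)]

lemma rpowAF_summable {t : ℝ} (ht : t < -1) : Summable fun n => rpowAF t n := by
  refine ((Real.summable_nat_rpow (p := t)).mpr ht).congr fun n => ?_
  rcases eq_or_ne n 0 with rfl | hn
  · simp [rpowAF_apply, Real.zero_rpow (by linarith : t ≠ 0)]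
  · rw [rpowAF_apply_ne t hn]

lemma conv_nonneg' {f g : ArithmeticFunction ℝ} (hf : ∀ n, 0 ≤ f n) (hg : ∀ n, 0 ≤ g n) (n : ℕ) :
    0 ≤ (f * g) n := by
  rw [ArithmeticFunction.mul_apply]
  exact Finset.sum_nonneg fun x _ => mul_nonneg (hf _) (hg _)

lemma conv_summable {f g : ArithmeticFunction ℝ} (hf : ∀ n, 0 ≤ f n) (hg : ∀ n, 0 ≤ g n)
    (hfs : Summable fun n => f n) (hgs : Summable fun n => g n) :
    Summable fun n => (f * g) n := by
  have hfn : 0 ≤ ∑' n, f n := tsum_nonneg hf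
  refine summable_of_sum_range_le (conv_nonneg' hf hg) (c := (∑' n, f n) * (∑' n, g n)) ?_
  intro N
  have hdisj : (↑(range N) : Set ℕ).PairwiseDisjoint (fun n => n.divisorsAntidiagonal) := by
    intro m _ n _ hmn
    refine Finset.disjoint_left.mpr fun x hxm hxn => hmn ?_
    have h1 := (Nat.mem_divisorsAntidiagonal.mp hxm).1
    have h2 := (Nat.mem_divisorsAntidiagonal.mp hxn).1
    rw [← h1, ← h2]
  calc ∑ n ∈ range N, (f * g) n
      = ∑ x ∈ (range N).biUnion (fun n => n.divisorsAntidiagonal), f x.1 * g x.2 := by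
        rw [Finset.sum_biUnion hdisj]
        exact Finset.sum_congr rfl fun n _ => (ArithmeticFunction.mul_apply)
    _ ≤ ∑ x ∈ range N ×ˢ range N, f x.1 * g x.2 := by
        refine Finset.sum_le_sum_of_subset_of_nonneg ?_ fun x _ _ => mul_nonneg (hf _) (hg _)
        intro x hx
        obtain ⟨n, hn, hxn⟩ := Finset.mem_biUnion.mp hx
        obtain ⟨hprod, hne⟩ := Nat.mem_divisorsAntidiagonal.mp hxn
        have hn' := Finset.mem_range.mp hn
        have hx1 : x.1 ≤ n := Nat.le_of_dvd (Nat.pos_of_ne_zero hne) ⟨x.2, hprod.symm⟩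
        have hx2 : x.2 ≤ n := Nat.le_of_dvd (Nat.pos_of_ne_zero hne) ⟨x.1, by rw [← hprod]; ring⟩
        exact Finset.mem_product.mpr ⟨Finset.mem_range.mpr (lt_of_le_of_lt hx1 hn'),
          Finset.mem_range.mpr (lt_of_le_of_lt hx2 hn')⟩
    _ = (∑ d ∈ range N, f d) * (∑ e ∈ range N, g e) := by
        rw [Finset.sum_mul_sum, Finset.sum_product]
    _ ≤ (∑' n, f n) * (∑' n, g n) := by
        refine mul_le_mul (hfs.sum_le_tsum _ (fun i _ => hf i))
          (hgs.sum_le_tsum _ (fun i _ => hg i)) (Finset.sum_nonneg fun i _ => hg i) hfn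



lemma T3_mult (t : ℝ) : (T3 t).IsMultiplicative :=
  (rpowAF_mult t).mul ((rpowAF_mult t).mul (rpowAF_mult t))

lemma T3_summable {t : ℝ} (ht : t < -1) : Summable fun n => T3 t n :=
  conv_summable (rpowAF_nonneg t) (conv_nonneg' (rpowAF_nonneg t) (rpowAF_nonneg t))
    (rpowAF_summable ht)
    (conv_summable (rpowAF_nonneg t) (rpowAF_nonneg t) (rpowAF_summable ht) (rpowAF_summable ht))

/-- The key coefficient bound `|a (n^2)| ≤ T3 (k-1) n`. -/
lemma abs_a_sq_le (k : ℕ) (hk : 1 ≤ k) (α β : ℕ → ℂ)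
    (hα : ∀ ℓ : ℕ, ℓ.Prime → ‖α ℓ‖ ≤ (ℓ : ℝ) ^ (((k : ℝ) - 1) / 2))
    (hβ : ∀ ℓ : ℕ, ℓ.Prime → ‖β ℓ‖ ≤ (ℓ : ℝ) ^ (((k : ℝ) - 1) / 2))
    (a : ℕ → ℂ) (ha1 : a 1 = 1)
    (haP : ∀ ℓ : ℕ, ℓ.Prime → ∀ r : ℕ, 1 ≤ r →
      a (ℓ ^ r) = ∑ i ∈ Finset.range (r + 1), α ℓ ^ i * β ℓ ^ (r - i))
    (haM : ∀ m n : ℕ, 0 < m → 0 < n → Nat.Coprime m n → a (m * n) = a m * a n) :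
    ∀ n : ℕ, 1 ≤ n → ‖a (n ^ 2)‖ ≤ T3 ((k : ℝ) - 1) n := by
  have htk : (0:ℝ) ≤ (k : ℝ) - 1 := by
    have : (1:ℝ) ≤ (k:ℝ) := by exact_mod_cast hk
    linarith
  intro n
  induction n using Nat.recOnPosPrimePosCoprime with
  | prime_pow p m hp hm =>
      intro _
      have hp' : p.Prime := hp
      have hppos : (0:ℝ) < (p:ℝ) := by exact_mod_cast hp'.pos
      set c : ℝ := (p : ℝ) ^ (((k : ℝ) - 1) / 2) with hc
      have hc0 : 0 ≤ c := (Real.rpow_pos_of_pos hppos _).le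
      have hkey : ‖a ((p ^ m) ^ 2)‖ ≤ (2 * m + 1 : ℝ) * (p:ℝ) ^ ((m:ℝ) * ((k:ℝ)-1)) := by
        rw [← pow_mul, haP p hp' (m * 2) (by omega)]
        refine le_trans (norm_sum_le _ _) ?_
        have hterm : ∀ i ∈ range (m * 2 + 1),
            ‖α p ^ i * β p ^ (m * 2 - i)‖ ≤ (p:ℝ) ^ ((m:ℝ) * ((k:ℝ)-1)) := by
          intro i hi
          have him : i ≤ m * 2 := Nat.lt_succ_iff.mp (Finset.mem_range.mp hi)
          rw [norm_mul, norm_pow, norm_pow]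
          have h1 : ‖α p‖ ^ i ≤ c ^ i :=
            pow_le_pow_left₀ (norm_nonneg _) (hα p hp') i
          have h2 : ‖β p‖ ^ (m * 2 - i) ≤ c ^ (m * 2 - i) :=
            pow_le_pow_left₀ (norm_nonneg _) (hβ p hp') _
          refine le_trans (mul_le_mul h1 h2 (pow_nonneg (norm_nonneg _) _)
            (pow_nonneg hc0 _)) ?_
          rw [← pow_add, Nat.add_sub_cancel' him, hc, ← Real.rpow_natCast _ (m * 2),
            ← Real.rpow_mul hppos.le]
          refine le_of_eq ?_
          congr 1
          push_cast
          ring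
        refine le_trans (Finset.sum_le_sum hterm) ?_
        rw [Finset.sum_const, card_range, nsmul_eq_mul]
        refine le_of_eq ?_
        push_cast
        ring
      refine le_trans hkey (T3_pp_ge htk hp' m)
  | zero => intro h; omega
  | one =>
      intro _
      have := (T3_mult ((k:ℝ)-1)).map_one
      simpa [ha1, this]
  | coprime u v hu1 hv1 huv ihu ihv =>
      intro _
      have hae : (u * v) ^ 2 = u ^ 2 * v ^ 2 := by ring
      rw [hae, haM (u ^ 2) (v ^ 2) (by positivity) (by positivity) (huv.pow 2 2), norm_mul]
      calc ‖a (u ^ 2)‖ * ‖a (v ^ 2)‖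
          ≤ T3 ((k:ℝ)-1) u * T3 ((k:ℝ)-1) v := by
            refine mul_le_mul (ihu (by omega)) (ihv (by omega)) (norm_nonneg _)
              (T3_nonneg _ _)
        _ = T3 ((k:ℝ)-1) (u * v) := ((T3_mult _).map_mul_of_coprime huv).symm



lemma natCast_pow_cpow (p e : ℕ) (s : ℂ) : ((p ^ e : ℕ) : ℂ) ^ s = (((p:ℕ):ℂ) ^ s) ^ e := by
  induction e with
  | zero => simp
  | succ e ih =>
      have hc : ((p ^ e * p : ℕ) : ℂ) = (((p ^ e : ℕ) : ℝ) : ℂ) * (((p : ℕ) : ℝ) : ℂ) := by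
        push_cast; ring
      rw [pow_succ, pow_succ, hc, Complex.mul_cpow_ofReal_nonneg (by positivity) (by positivity),
        Complex.ofReal_natCast, Complex.ofReal_natCast, ih]
lemma tsum_nat_eq_tsum_pnat (f : ℕ → ℂ) (hf : f 0 = 0) : ∑' n : ℕ, f n = ∑' n : ℕ+, f n := by
  rw [← tsum_subtype_eq_of_support_subset (s := {n : ℕ | 0 < n})
    (fun n hn => by simpa using Nat.pos_of_ne_zero (fun h => by simp [h, hf] at hn))]
  rfl

lemma hasSum_symm_sq_local (A B X : ℂ) (hx : ‖A ^ 2 * X‖ < 1) (hy : ‖B ^ 2 * X‖ < 1)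
    (c : ℕ → ℂ) (hc0 : c 0 = 1)
    (hc : ∀ e : ℕ, 1 ≤ e → c e = ∑ i ∈ Finset.range (2 * e + 1), A ^ i * B ^ (2 * e - i)) :
    HasSum (fun e => c e * X ^ e)
      ((1 + A * B * X) * ((1 - A ^ 2 * X)⁻¹ * (1 - B ^ 2 * X)⁻¹)) := by
  set x := A ^ 2 * X with hxdef
  set y := B ^ 2 * X with hydef
  set D : ℂ := (1 - x)⁻¹ * (1 - y)⁻¹ with hD
  set d : ℕ → ℂ := fun e => ∑ i ∈ range (e + 1), (A ^ (2 * i) * B ^ (2 * (e - i))) with hd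
  -- Cauchy product of the two geometric series
  have hgx : Summable fun n : ℕ => ‖x ^ n‖ := by
    simpa [norm_pow] using summable_geometric_of_lt_one (norm_nonneg x) hx
  have hgy : Summable fun n : ℕ => ‖y ^ n‖ := by
    simpa [norm_pow] using summable_geometric_of_lt_one (norm_nonneg y) hy
  have hsum0 : Summable (fun n => ∑ i ∈ range (n + 1), x ^ i * y ^ (n - i)) :=
    (summable_norm_sum_mul_range_of_summable_norm hgx hgy).of_norm
  have hval : ∑' n : ℕ, (∑ i ∈ range (n + 1), x ^ i * y ^ (n - i)) = D := by
    rw [← tsum_mul_tsum_eq_tsum_sum_range_of_summable_norm hgx hgy,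
      tsum_geometric_of_norm_lt_one hx, tsum_geometric_of_norm_lt_one hy]
  have hkey : (fun n => ∑ i ∈ range (n + 1), x ^ i * y ^ (n - i))
      = fun n => d n * X ^ n := by
    funext n
    rw [hd, Finset.sum_mul]
    refine Finset.sum_congr rfl fun i hi => ?_
    have him : i ≤ n := Nat.lt_succ_iff.mp (Finset.mem_range.mp hi)
    rw [hxdef, hydef, mul_pow, mul_pow, ← pow_mul, ← pow_mul]
    have : X ^ i * X ^ (n - i) = X ^ n := by
      rw [← pow_add, Nat.add_sub_cancel' him]
    calc A ^ (2 * i) * X ^ i * (B ^ (2 * (n - i)) * X ^ (n - i))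
        = A ^ (2 * i) * B ^ (2 * (n - i)) * (X ^ i * X ^ (n - i)) := by ring
      _ = A ^ (2 * i) * B ^ (2 * (n - i)) * X ^ n := by rw [this]
  have hL1 : HasSum (fun n => d n * X ^ n) D := by
    rw [← hkey, ← hval]
    exact hsum0.hasSum
  -- recurrences
  have hDd : ∀ e : ℕ, d (e + 1) = B ^ 2 * d e + A ^ (2 * (e + 1)) := by
    intro e
    rw [hd]
    simp only []
    rw [Finset.sum_range_succ, Nat.sub_self, Finset.mul_sum]
    congr 1
    · refine Finset.sum_congr rfl fun i hi => ?_
      have him : i ≤ e := Nat.lt_succ_iff.mp (Finset.mem_range.mp hi)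
      have h2 : 2 * (e + 1 - i) = 2 * (e - i) + 2 := by omega
      rw [h2, pow_add]
      ring
    · simp
  set bseq : ℕ → ℂ := fun m => ∑ i ∈ range (m + 1), A ^ i * B ^ (m - i) with hb
  have hH : ∀ e : ℕ, bseq (2 * e + 2) = B ^ 2 * bseq (2 * e) + A ^ (2 * e + 1) * B + A ^ (2 * e + 2) := by
    intro e
    rw [hb]
    simp only []
    rw [show 2 * e + 2 + 1 = (2 * e + 1) + 1 + 1 from rfl, Finset.sum_range_succ,
      Finset.sum_range_succ, Finset.mul_sum]
    have e1 : 2 * e + 2 - (2 * e + 1) = 1 := by omega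
    have e2 : 2 * e + 2 - (2 * e + 2) = 0 := by omega
    rw [e1, e2]
    have h3 : ∀ i ∈ range (2 * e + 1), A ^ i * B ^ (2 * e + 2 - i)
        = B ^ 2 * (A ^ i * B ^ (2 * e - i)) := by
      intro i hi
      have him : i ≤ 2 * e := Nat.lt_succ_iff.mp (Finset.mem_range.mp hi)
      have h4 : 2 * e + 2 - i = (2 * e - i) + 2 := by omega
      rw [h4, pow_add]
      ring
    rw [Finset.sum_congr rfl h3]
    ring
  have hC : ∀ e : ℕ, bseq (2 * e + 2) = d (e + 1) + A * B * d e := by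
    intro e
    induction e with
    | zero =>
        rw [hb, hd]
        simp only []
        norm_num [Finset.sum_range_succ]
        ring
    | succ e ih =>
        rw [hH (e + 1), show 2 * (e + 1) = 2 * e + 2 from by ring, ih, hDd (e + 1), hDd e]
        ring
  -- shifted series
  set dm : ℕ → ℂ := fun e => if e = 0 then 0 else d (e - 1) * X ^ (e - 1) with hdm
  have hdmsum : HasSum dm D := by
    refine (hasSum_nat_add_iff' 1).mp ?_
    have h1 : (fun n : ℕ => dm (n + 1)) = fun n => d n * X ^ n := by
      funext n
      rw [hdm]
      simp
    have h2 : ∑ i ∈ range 1, dm i = 0 := by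
      rw [hdm]
      simp
    rw [h1, h2, sub_zero]
    exact hL1
  have hfun : ∀ e : ℕ, c e * X ^ e = d e * X ^ e + (A * B * X) * dm e := by
    intro e
    cases e with
    | zero =>
        rw [hdm, hd, hc0]
        simp
    | succ e =>
        have hdmval : dm (e + 1) = d e * X ^ e := by rw [hdm]; simp
        have hcval : c (e + 1) = d (e + 1) + A * B * d e := by
          rw [hc (e + 1) (by omega), show 2 * (e + 1) = 2 * e + 2 from by ring, ← hC e]
        rw [hdmval, hcval, pow_succ]
        ring
  have final := hL1.add (hdmsum.mul_left (A * B * X))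
  have : (fun e => c e * X ^ e) = fun e => d e * X ^ e + (A * B * X) * dm e := funext hfun
  rw [this]
  convert final using 1
  ring


lemma natCast_mul_cpow (m n : ℕ) (w : ℂ) (hw : w ≠ 0) :
    ((m * n : ℕ) : ℂ) ^ w = (m : ℂ) ^ w * (n : ℂ) ^ w := by
  rcases eq_or_ne m 0 with rfl | hm
  · simp [Complex.zero_cpow hw]
  rcases eq_or_ne n 0 with rfl | hn
  · simp [Complex.zero_cpow hw]
  have hc : ((m * n : ℕ) : ℂ) = (((m : ℕ) : ℝ) : ℂ) * (((n : ℕ) : ℝ) : ℂ) := by push_cast; ring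
  rw [hc, Complex.mul_cpow_ofReal_nonneg (by positivity) (by positivity),
    Complex.ofReal_natCast, Complex.ofReal_natCast]

/-- For `Re(s) > k`, the symmetric-square local Euler factors are
multipliable and
`∏_ℓ [(1−χ(ℓ)α_ℓ²ℓ^{−s})(1−χ(ℓ)α_ℓβ_ℓℓ^{−s})(1−χ(ℓ)β_ℓ²ℓ^{−s})]⁻¹
  = (∑_{m≥1} χ(m)²ε(m)² m^{2k−2−2s}) · (∑_{n≥1} a(n²)χ(n) n^{−s})`,
both series on the right converging absolutely. -/
theorem symm_square_imprimitive_euler_product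
    (k : ℕ) (hk : 1 ≤ k)
    (α β : ℕ → ℂ)
    (hα : ∀ ℓ : ℕ, ℓ.Prime → ‖α ℓ‖ ≤ (ℓ : ℝ) ^ (((k : ℝ) - 1) / 2))
    (hβ : ∀ ℓ : ℕ, ℓ.Prime → ‖β ℓ‖ ≤ (ℓ : ℝ) ^ (((k : ℝ) - 1) / 2))
    (a : ℕ → ℂ) (ha1 : a 1 = 1)
    (haP : ∀ ℓ : ℕ, ℓ.Prime → ∀ r : ℕ, 1 ≤ r →
      a (ℓ ^ r) = ∑ i ∈ Finset.range (r + 1), α ℓ ^ i * β ℓ ^ (r - i))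
    (haM : ∀ m n : ℕ, 0 < m → 0 < n → Nat.Coprime m n → a (m * n) = a m * a n)
    (Nf Nχ : ℕ) (ε : DirichletCharacter ℂ Nf) (χ : DirichletCharacter ℂ Nχ)
    (hαβ : ∀ ℓ : ℕ, ℓ.Prime → α ℓ * β ℓ = ε (ℓ : ZMod Nf) * (ℓ : ℂ) ^ (k - 1))
    (s : ℂ) (hs : (k : ℝ) < s.re) :
    Multipliable (fun ℓ : Nat.Primes =>
      ((1 - χ ((ℓ : ℕ) : ZMod Nχ) * α (ℓ : ℕ) ^ 2 * ((ℓ : ℕ) : ℂ) ^ (-s)) *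
        (1 - χ ((ℓ : ℕ) : ZMod Nχ) * (α (ℓ : ℕ) * β (ℓ : ℕ)) * ((ℓ : ℕ) : ℂ) ^ (-s)) *
        (1 - χ ((ℓ : ℕ) : ZMod Nχ) * β (ℓ : ℕ) ^ 2 * ((ℓ : ℕ) : ℂ) ^ (-s)))⁻¹) ∧
    Summable (fun m : ℕ+ =>
      ‖χ ((m : ℕ) : ZMod Nχ) ^ 2 * ε ((m : ℕ) : ZMod Nf) ^ 2 *
        ((m : ℕ) : ℂ) ^ (2 * (k : ℂ) - 2 - 2 * s)‖) ∧
    Summable (fun n : ℕ+ =>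
      ‖a ((n : ℕ) ^ 2) * χ ((n : ℕ) : ZMod Nχ) * ((n : ℕ) : ℂ) ^ (-s)‖) ∧
    (∏' ℓ : Nat.Primes,
      ((1 - χ ((ℓ : ℕ) : ZMod Nχ) * α (ℓ : ℕ) ^ 2 * ((ℓ : ℕ) : ℂ) ^ (-s)) *
        (1 - χ ((ℓ : ℕ) : ZMod Nχ) * (α (ℓ : ℕ) * β (ℓ : ℕ)) * ((ℓ : ℕ) : ℂ) ^ (-s)) *
        (1 - χ ((ℓ : ℕ) : ZMod Nχ) * β (ℓ : ℕ) ^ 2 * ((ℓ : ℕ) : ℂ) ^ (-s)))⁻¹) =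
    (∑' m : ℕ+, χ ((m : ℕ) : ZMod Nχ) ^ 2 * ε ((m : ℕ) : ZMod Nf) ^ 2 *
        ((m : ℕ) : ℂ) ^ (2 * (k : ℂ) - 2 - 2 * s)) *
      (∑' n : ℕ+, a ((n : ℕ) ^ 2) * χ ((n : ℕ) : ZMod Nχ) * ((n : ℕ) : ℂ) ^ (-s)) := by
  have hsre : (k : ℝ) < s.re := hs
  have hk1 : (1 : ℝ) ≤ (k : ℝ) := by exact_mod_cast hk
  set sre : ℝ := s.re with hsredef
  set w : ℂ := 2 * (k : ℂ) - 2 - 2 * s with hwdef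
  have hwre : w.re = 2 * (k : ℝ) - 2 - 2 * sre := by
    simp [hwdef, Complex.sub_re, Complex.mul_re]
    exact hsredef.symm
  have hwre_lt : w.re < -1 := by rw [hwre]; linarith
  have hw0 : w ≠ 0 := fun h => by rw [h] at hwre_lt; simp at hwre_lt; linarith
  have hs0 : -s ≠ 0 := by
    intro h
    have h1 : s = 0 := neg_eq_zero.mp h
    have h2 : sre = 0 := by rw [hsredef, h1, Complex.zero_re]
    rw [h2] at hsre
    linarith
  -- the completely multiplicative function for the first series
  set g₀ : ℕ →*₀ ℂ :=
    { toFun := fun n => χ ((n : ℕ) : ZMod Nχ) ^ 2 * ε ((n : ℕ) : ZMod Nf) ^ 2 * ((n : ℕ) : ℂ) ^ w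
      map_zero' := by simp [Complex.zero_cpow hw0]
      map_one' := by simp
      map_mul' := by
        intro m n
        simp only [Nat.cast_mul, map_mul]
        have hcp := natCast_mul_cpow m n w hw0
        rw [Nat.cast_mul] at hcp
        rw [hcp]
        ring } with hg₀def
  have hg₀apply : ∀ n : ℕ,
      g₀ n = χ ((n : ℕ) : ZMod Nχ) ^ 2 * ε ((n : ℕ) : ZMod Nf) ^ 2 * ((n : ℕ) : ℂ) ^ w := fun _ => rfl
  -- the multiplicative function for the second series
  set F : ℕ → ℂ := fun n => a (n ^ 2) * χ ((n : ℕ) : ZMod Nχ) * ((n : ℕ) : ℂ) ^ (-s) with hFdef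
  have hF0 : F 0 = 0 := by simp [hFdef, Complex.zero_cpow hs0]
  have hF1 : F 1 = 1 := by simp [hFdef, ha1]
  have hFmul : ∀ {m n : ℕ}, Nat.Coprime m n → F (m * n) = F m * F n := by
    intro m n hmn
    rcases eq_or_ne m 0 with rfl | hm
    · simp [hFdef, Complex.zero_cpow hs0]
    rcases eq_or_ne n 0 with rfl | hn
    · simp [hFdef, Complex.zero_cpow hs0]
    simp only [hFdef]
    rw [mul_pow, haM (m ^ 2) (n ^ 2) (by positivity) (by positivity) (hmn.pow 2 2),
      Nat.cast_mul, map_mul, natCast_mul_cpow m n (-s) hs0]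
    ring
  -- summability of ‖g₀‖
  have hgnorm : Summable fun n => ‖g₀ n‖ := by
    refine Summable.of_nonneg_of_le (fun n => norm_nonneg _)
      (f := fun n => rpowAF (2 * (k : ℝ) - 2 - 2 * sre) n) ?_
      (rpowAF_summable (by linarith))
    intro n
    rcases eq_or_ne n 0 with rfl | hn
    · simp [rpowAF_apply]
    have hnp : 0 < n := Nat.pos_of_ne_zero hn
    show ‖g₀ n‖ ≤ rpowAF (2 * (k : ℝ) - 2 - 2 * sre) n
    rw [rpowAF_apply_ne _ hn, hg₀apply, ← hwre]
    calc ‖χ ((n : ℕ) : ZMod Nχ) ^ 2 * ε ((n : ℕ) : ZMod Nf) ^ 2 * ((n : ℕ) : ℂ) ^ w‖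
        = ‖χ ((n : ℕ) : ZMod Nχ)‖ ^ 2 * ‖ε ((n : ℕ) : ZMod Nf)‖ ^ 2 * ‖((n : ℕ) : ℂ) ^ w‖ := by
          rw [norm_mul, norm_mul, norm_pow, norm_pow]
      _ ≤ 1 * 1 * ‖((n : ℕ) : ℂ) ^ w‖ := by
          refine mul_le_mul (mul_le_mul (pow_le_one₀ (norm_nonneg _) (χ.norm_le_one _))
            (pow_le_one₀ (norm_nonneg _) (ε.norm_le_one _)) (by positivity) (by norm_num))
            le_rfl (norm_nonneg _) (by norm_num)
      _ = (n : ℝ) ^ w.re := by rw [one_mul, one_mul, Complex.norm_natCast_cpow_of_pos hnp]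
  -- summability of ‖F‖
  have hFbound : ∀ n : ℕ, ‖F n‖ ≤ T3 ((k : ℝ) - 1 - sre) n := by
    intro n
    rcases eq_or_ne n 0 with rfl | hn
    · simp [hF0]
    have hnp : 0 < n := Nat.pos_of_ne_zero hn
    have h1 : ‖F n‖ ≤ ‖a (n ^ 2)‖ * (n : ℝ) ^ (-sre) := by
      rw [hFdef]
      simp only []
      rw [norm_mul, norm_mul, Complex.norm_natCast_cpow_of_pos hnp]
      have : (-s).re = -sre := by simp [hsredef]
      rw [this]
      refine mul_le_mul_of_nonneg_right ?_ (Real.rpow_nonneg (Nat.cast_nonneg n) _)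
      calc ‖a (n ^ 2)‖ * ‖χ ((n : ℕ) : ZMod Nχ)‖
          ≤ ‖a (n ^ 2)‖ * 1 :=
            mul_le_mul_of_nonneg_left (χ.norm_le_one _) (norm_nonneg _)
        _ = ‖a (n ^ 2)‖ := mul_one _
    refine le_trans h1 ?_
    have h2 : ‖a (n ^ 2)‖ ≤ T3 ((k : ℝ) - 1) n :=
      abs_a_sq_le k hk α β hα hβ a ha1 haP haM n hnp
    calc ‖a (n ^ 2)‖ * (n : ℝ) ^ (-sre)
        ≤ T3 ((k : ℝ) - 1) n * (n : ℝ) ^ (-sre) := by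
          refine mul_le_mul_of_nonneg_right h2 (Real.rpow_nonneg (Nat.cast_nonneg n) _)
      _ = T3 ((k : ℝ) - 1) n * rpowAF (-sre) n := by rw [rpowAF_apply_ne _ hn]
      _ = T3 ((k : ℝ) - 1 + -sre) n := T3_twist _ _ n
      _ = T3 ((k : ℝ) - 1 - sre) n := by rw [show (k:ℝ) - 1 + -sre = (k:ℝ) - 1 - sre from by ring]
  have hFnorm : Summable fun n => ‖F n‖ :=
    Summable.of_nonneg_of_le (fun n => norm_nonneg _) hFbound (T3_summable (by linarith))
  -- Euler products
  have hgProd : HasProd (fun p : Nat.Primes => (1 - g₀ (p : ℕ))⁻¹) (∑' n : ℕ, g₀ n) :=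
    EulerProduct.eulerProduct_completely_multiplicative_hasProd hgnorm
  have hFProd : HasProd (fun p : Nat.Primes => ∑' e : ℕ, F ((p : ℕ) ^ e)) (∑' n : ℕ, F n) :=
    EulerProduct.eulerProduct_hasProd hF1 hFmul hFnorm hF0
  have hprod := hgProd.mul hFProd
  -- local identity
  have hlocal : ∀ p : Nat.Primes,
      (1 - g₀ (p : ℕ))⁻¹ * (∑' e : ℕ, F ((p : ℕ) ^ e)) =
      ((1 - χ ((p : ℕ) : ZMod Nχ) * α (p : ℕ) ^ 2 * ((p : ℕ) : ℂ) ^ (-s)) *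
        (1 - χ ((p : ℕ) : ZMod Nχ) * (α (p : ℕ) * β (p : ℕ)) * ((p : ℕ) : ℂ) ^ (-s)) *
        (1 - χ ((p : ℕ) : ZMod Nχ) * β (p : ℕ) ^ 2 * ((p : ℕ) : ℂ) ^ (-s)))⁻¹ := by
    intro p
    have hp : (p : ℕ).Prime := p.prop
    set P : ℕ := (p : ℕ) with hPdef
    set A : ℂ := α P with hA
    set B : ℂ := β P with hB
    set X : ℂ := χ ((P : ℕ) : ZMod Nχ) * ((P : ℕ) : ℂ) ^ (-s) with hX
    have hPpos : 0 < P := hp.pos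
    have hP1 : 1 < (P : ℝ) := by exact_mod_cast hp.one_lt
    have hPr : (0 : ℝ) < (P : ℝ) := by positivity
    set cb : ℝ := (P : ℝ) ^ (((k : ℝ) - 1) / 2) with hcb
    have hcb0 : 0 ≤ cb := (Real.rpow_pos_of_pos hPr _).le
    have hcbsq : cb * cb = (P : ℝ) ^ ((k : ℝ) - 1) := by
      rw [hcb, ← Real.rpow_add hPr]; norm_num
    have hXnorm : ‖X‖ ≤ (P : ℝ) ^ (-sre) := by
      rw [hX, norm_mul, Complex.norm_natCast_cpow_of_pos hPpos]
      have h5 : (-s).re = -sre := by simp [hsredef]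
      rw [h5]
      calc ‖χ ((P : ℕ) : ZMod Nχ)‖ * (P : ℝ) ^ (-sre) ≤ 1 * (P : ℝ) ^ (-sre) :=
            mul_le_mul_of_nonneg_right (χ.norm_le_one _)
              (Real.rpow_nonneg (Nat.cast_nonneg P) _)
        _ = (P : ℝ) ^ (-sre) := one_mul _
    have hexp_lt : (P : ℝ) ^ ((k : ℝ) - 1 + -sre) < 1 :=
      Real.rpow_lt_one_of_one_lt_of_neg hP1 (by linarith)
    have key_norm : ∀ u v : ℂ, ‖u‖ ≤ cb → ‖v‖ ≤ cb → ‖u * v * X‖ < 1 := by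
      intro u v hu hv
      calc ‖u * v * X‖ = ‖u‖ * ‖v‖ * ‖X‖ := by
            rw [norm_mul, norm_mul]
        _ ≤ cb * cb * (P : ℝ) ^ (-sre) := by
            refine mul_le_mul (mul_le_mul hu hv (norm_nonneg _) hcb0) hXnorm
              (norm_nonneg _) (by positivity)
        _ = (P : ℝ) ^ ((k : ℝ) - 1 + -sre) := by rw [hcbsq, ← Real.rpow_add hPr]
        _ < 1 := hexp_lt
    have hAX : ‖A ^ 2 * X‖ < 1 := by
      have h6 := key_norm A A (hα P hp) (hα P hp)
      rw [show A * A = A ^ 2 from (sq A).symm] at h6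
      exact h6
    have hBX : ‖B ^ 2 * X‖ < 1 := by
      have h6 := key_norm B B (hβ P hp) (hβ P hp)
      rw [show B * B = B ^ 2 from (sq B).symm] at h6
      exact h6
    have hABX : ‖A * B * X‖ < 1 := key_norm A B (hα P hp) (hβ P hp)
    -- the sum over prime powers
    have hFe : ∀ e : ℕ, F (P ^ e) = a (P ^ (2 * e)) * X ^ e := by
      intro e
      rw [hFdef]
      simp only []
      rw [← pow_mul, show e * 2 = 2 * e from Nat.mul_comm e 2, Nat.cast_pow, map_pow,
        natCast_pow_cpow, hX, mul_pow]
      ring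
    have hloc : HasSum (fun e : ℕ => a (P ^ (2 * e)) * X ^ e)
        ((1 + A * B * X) * ((1 - A ^ 2 * X)⁻¹ * (1 - B ^ 2 * X)⁻¹)) := by
      refine hasSum_symm_sq_local A B X hAX hBX _ ?_ ?_
      · rw [mul_zero, pow_zero]; exact ha1
      · intro e he
        rw [hA, hB]
        exact haP P hp (2 * e) (by omega)
    have htsum : ∑' e : ℕ, F (P ^ e)
        = (1 + A * B * X) * ((1 - A ^ 2 * X)⁻¹ * (1 - B ^ 2 * X)⁻¹) := by
      rw [tsum_congr hFe]
      exact hloc.tsum_eq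
    have hPC : ((P : ℕ) : ℂ) ≠ 0 := by
      simp only [Ne, Nat.cast_eq_zero]
      omega
    have hwsplit : ((P : ℕ) : ℂ) ^ w = (((P : ℕ) : ℂ) ^ (k - 1)) ^ 2 * (((P : ℕ) : ℂ) ^ (-s)) ^ 2 := by
      have h1 : w = ((2 * (k - 1) : ℕ) : ℂ) + (-s + -s) := by
        rw [hwdef]
        push_cast [Nat.cast_sub hk]
        ring
      rw [h1, Complex.cpow_add _ _ hPC, Complex.cpow_add _ _ hPC, Complex.cpow_natCast,
        show 2 * (k - 1) = (k - 1) * 2 from Nat.mul_comm _ _, pow_mul]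
      ring
    have hg₀P : g₀ P = (A * B * X) ^ 2 := by
      rw [hg₀apply, hwsplit, hX, hA, hB]
      rw [show α P * β P = ε ((P : ℕ) : ZMod Nf) * ((P : ℕ) : ℂ) ^ (k - 1) from hαβ P hp]
      ring
    have hne : ∀ z : ℂ, ‖z‖ < 1 → 1 - z ≠ 0 := by
      intro z hz h
      have hz1 : z = 1 := by linear_combination -h
      rw [hz1] at hz
      simp at hz
    have n1 : 1 - A ^ 2 * X ≠ 0 := hne _ hAX
    have n2 : 1 - A * B * X ≠ 0 := hne _ hABX
    have n3 : 1 - B ^ 2 * X ≠ 0 := hne _ hBX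
    have n4 : 1 + A * B * X ≠ 0 := by
      have h7 := hne (-(A * B * X)) (by rwa [norm_neg])
      rw [sub_neg_eq_add] at h7
      exact h7
    have hfac1 : 1 - χ ((P : ℕ) : ZMod Nχ) * α P ^ 2 * ((P : ℕ) : ℂ) ^ (-s) = 1 - A ^ 2 * X := by
      rw [hX, hA]; ring
    have hfac2 : 1 - χ ((P : ℕ) : ZMod Nχ) * (α P * β P) * ((P : ℕ) : ℂ) ^ (-s)
        = 1 - A * B * X := by
      rw [hX, hA, hB]; ring
    have hfac3 : 1 - χ ((P : ℕ) : ZMod Nχ) * β P ^ 2 * ((P : ℕ) : ℂ) ^ (-s) = 1 - B ^ 2 * X := by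
      rw [hX, hB]; ring
    rw [htsum, hg₀P, hfac1, hfac2, hfac3,
      show (1 : ℂ) - (A * B * X) ^ 2 = (1 - A * B * X) * (1 + A * B * X) from by ring]
    field_simp
  -- assemble
  have heq : (fun p : Nat.Primes => (1 - g₀ (p : ℕ))⁻¹ * (∑' e : ℕ, F ((p : ℕ) ^ e)))
      = fun ℓ : Nat.Primes =>
      ((1 - χ ((ℓ : ℕ) : ZMod Nχ) * α (ℓ : ℕ) ^ 2 * ((ℓ : ℕ) : ℂ) ^ (-s)) *
        (1 - χ ((ℓ : ℕ) : ZMod Nχ) * (α (ℓ : ℕ) * β (ℓ : ℕ)) * ((ℓ : ℕ) : ℂ) ^ (-s)) *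
        (1 - χ ((ℓ : ℕ) : ZMod Nχ) * β (ℓ : ℕ) ^ 2 * ((ℓ : ℕ) : ℂ) ^ (-s)))⁻¹ :=
    funext hlocal
  rw [heq] at hprod
  refine ⟨hprod.multipliable, ?_, ?_, ?_⟩
  · exact hgnorm.comp_injective PNat.coe_injective
  · exact hFnorm.comp_injective PNat.coe_injective
  · rw [hprod.tprod_eq]
    congr 1
    · rw [tsum_nat_eq_tsum_pnat (fun n => g₀ n) (map_zero g₀)]
      exact tsum_congr fun n => rfl
    · rw [tsum_nat_eq_tsum_pnat F hF0]

end SymSqAux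
end

section
/- For every s ∈ ℂ with Re(s) > k, the family of local factors ℓ ↦ (1 − χ(ℓ)²α_ℓ²β_ℓ² ℓ^{−2s}) · [(1 − χ(ℓ)α_ℓ² ℓ^{−s})(1 − χ(ℓ)α_ℓβ_ℓ ℓ^{−s})²(1 − χ(ℓ)β_ℓ² ℓ^{−s})]^{−1}, indexed by primes ℓ, is multipliable, and ∑_{n≥1} a(n)² χ(n) n^{−s} = ∏_ℓ (1 − χ(ℓ)²α_ℓ²β_ℓ² ℓ^{−2s}) · [(1 − χ(ℓ)α_ℓ² ℓ^{−s})(1 − χ(ℓ)α_ℓβ_ℓ ℓ^{−s})²(1 − χ(ℓ)β_ℓ² ℓ^{−s})]^{−1}, the series on the left converging absolutely. (This is the Euler product expressing the imprimitive Rankin–Selberg convolution L^imp(f, f, χ, s).) -/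
private lemma rsaux_sq_le (e : ℕ) : ((e : ℝ) + 2) ^ 2 ≤ 12 * 2 ^ e := by
  induction e with
  | zero => norm_num
  | succ n ih =>
    have h2 : (1 : ℝ) ≤ 2 ^ n := one_le_pow₀ (by norm_num)
    have hn : (n : ℝ) < 2 ^ n := by exact_mod_cast (Nat.lt_two_pow_self (n := n))
    have h3 : (2:ℝ) ^ (n+1) = 2 * 2 ^ n := by rw [pow_succ]; ring
    push_cast
    nlinarith [ih, h2, hn, h3]

private lemma rsaux_one_sub_ne {z : ℂ} (h : ‖z‖ < 1) : 1 - z ≠ 0 := by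
  intro h0
  rw [sub_eq_zero] at h0
  rw [← h0] at h
  simp at h

private lemma rsaux_local (A B x S : ℂ) (u : ℕ → ℂ) (hu0 : u 0 = 1) (hu1 : u 1 = A + B)
    (hrec : ∀ m, u (m + 2) = (A + B) * u (m + 1) - A * B * u m)
    (hS : HasSum (fun e => u e ^ 2 * x ^ e) S) :
    S * ((1 - A ^ 2 * x) * (1 - A * B * x) * (1 - B ^ 2 * x)) = 1 + A * B * x := by
  classical
  set g : ℕ → ℕ → ℂ := fun j e => if j ≤ e then u (e - j) ^ 2 * x ^ e else 0 with hg
  have hshift : ∀ j : ℕ, HasSum (g j) (S * x ^ j) := by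
    intro j
    have h1 : HasSum (fun e => (u e ^ 2 * x ^ e) * x ^ j) (S * x ^ j) := hS.mul_right _
    have h2 : (g j) ∘ (fun e => e + j) = fun e => (u e ^ 2 * x ^ e) * x ^ j := by
      funext e
      simp only [Function.comp, hg]
      rw [if_pos (Nat.le_add_left j e), Nat.add_sub_cancel, pow_add]
      ring
    refine (Function.Injective.hasSum_iff (f := g j) (g := fun e => e + j)
      (add_left_injective j) ?_).mp (by rw [h2]; exact h1)
    intro e he
    simp only [Set.mem_range, not_exists] at he
    have hje : ¬ j ≤ e := fun hle => he (e - j) (by omega)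
    simp [hg, hje]
  set P : ℕ → ℂ := fun e => u e ^ 2 * x ^ e - (A^2 + A*B + B^2) * g 1 e
      + (A*B)*(A^2 + A*B + B^2) * g 2 e - (A*B)^3 * g 3 e with hP
  have hPsum : HasSum P (S - (A^2+A*B+B^2) * (S * x^1) + (A*B)*(A^2+A*B+B^2) * (S*x^2)
      - (A*B)^3 * (S*x^3)) :=
    ((hS.sub ((hshift 1).mul_left _)).add ((hshift 2).mul_left _)).sub ((hshift 3).mul_left _)
  have hvanish : ∀ e ∉ Finset.range 3, P e = 0 := by
    intro e he
    obtain ⟨m, rfl⟩ : ∃ m, e = m + 3 := ⟨e - 3, by simp only [Finset.mem_range] at he; omega⟩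
    have hg1 : g 1 (m+3) = u (m+2) ^ 2 * x ^ (m+3) := by
      simp only [hg]; rw [if_pos (by omega : 1 ≤ m+3), show m+3-1 = m+2 by omega]
    have hg2 : g 2 (m+3) = u (m+1) ^ 2 * x ^ (m+3) := by
      simp only [hg]; rw [if_pos (by omega : 2 ≤ m+3), show m+3-2 = m+1 by omega]
    have hg3 : g 3 (m+3) = u m ^ 2 * x ^ (m+3) := by
      simp only [hg]; rw [if_pos (by omega : 3 ≤ m+3), show m+3-3 = m by omega]
    have h3 : u (m+3) = (A+B) * u (m+2) - A*B*u (m+1) := hrec (m+1)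
    simp only [hP, hg1, hg2, hg3, h3, hrec m]
    ring
  have hfin : HasSum P (∑ e ∈ Finset.range 3, P e) := hasSum_sum_of_ne_finset_zero hvanish
  have huniq := hPsum.unique hfin
  have hP0 : P 0 = 1 := by simp [hP, hg, hu0]
  have hP1 : P 1 = A * B * x := by
    have : g 1 1 = u 0 ^ 2 * x ^ 1 := by simp only [hg]; rw [if_pos le_rfl]
    simp only [hP, this, hu0, hu1]
    have hg21 : g 2 1 = 0 := by simp [hg]
    have hg31 : g 3 1 = 0 := by simp [hg]
    rw [hg21, hg31]
    ring
  have hP2 : P 2 = 0 := by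
    have h2 : u 2 = (A+B) * u 1 - A*B*u 0 := hrec 0
    have hga : g 1 2 = u 1 ^ 2 * x ^ 2 := by simp only [hg]; rw [if_pos (by omega : 1 ≤ 2)]
    have hgb : g 2 2 = u 0 ^ 2 * x ^ 2 := by simp only [hg]; rw [if_pos le_rfl]
    have hgc : g 3 2 = 0 := by simp [hg]
    simp only [hP, hga, hgb, hgc, h2, hu0, hu1]
    ring
  rw [Finset.sum_range_succ, Finset.sum_range_succ, Finset.sum_range_one, hP0, hP1, hP2] at huniq
  linear_combination huniq

/-- For `Re(s) > k`, the Rankin–Selberg local factors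
`(1 − χ(ℓ)²α_ℓ²β_ℓ²ℓ^{−2s}) · [(1−χ(ℓ)α_ℓ²ℓ^{−s})(1−χ(ℓ)α_ℓβ_ℓℓ^{−s})²(1−χ(ℓ)β_ℓ²ℓ^{−s})]⁻¹`
are multipliable, and their product equals `∑_{n≥1} a(n)²χ(n) n^{−s}`, the series
converging absolutely. -/
theorem rankin_selberg_imprimitive_euler_product
    (k : ℕ) (hk : 1 ≤ k)
    (α β : ℕ → ℂ)
    (hα : ∀ ℓ : ℕ, ℓ.Prime → ‖α ℓ‖ ≤ (ℓ : ℝ) ^ (((k : ℝ) - 1) / 2))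
    (hβ : ∀ ℓ : ℕ, ℓ.Prime → ‖β ℓ‖ ≤ (ℓ : ℝ) ^ (((k : ℝ) - 1) / 2))
    (a : ℕ → ℂ) (ha1 : a 1 = 1)
    (haP : ∀ ℓ : ℕ, ℓ.Prime → ∀ r : ℕ, 1 ≤ r →
      a (ℓ ^ r) = ∑ i ∈ Finset.range (r + 1), α ℓ ^ i * β ℓ ^ (r - i))
    (haM : ∀ m n : ℕ, 0 < m → 0 < n → Nat.Coprime m n → a (m * n) = a m * a n)
    (Nf Nχ : ℕ) (ε : DirichletCharacter ℂ Nf) (χ : DirichletCharacter ℂ Nχ)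
    (hαβ : ∀ ℓ : ℕ, ℓ.Prime → α ℓ * β ℓ = ε (ℓ : ZMod Nf) * (ℓ : ℂ) ^ (k - 1))
    (s : ℂ) (hs : (k : ℝ) < s.re) :
    Multipliable (fun ℓ : Nat.Primes =>
      (1 - χ ((ℓ : ℕ) : ZMod Nχ) ^ 2 * (α (ℓ : ℕ) ^ 2 * β (ℓ : ℕ) ^ 2) *
          ((ℓ : ℕ) : ℂ) ^ (-(2 * s))) *
        ((1 - χ ((ℓ : ℕ) : ZMod Nχ) * α (ℓ : ℕ) ^ 2 * ((ℓ : ℕ) : ℂ) ^ (-s)) *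
          (1 - χ ((ℓ : ℕ) : ZMod Nχ) * (α (ℓ : ℕ) * β (ℓ : ℕ)) * ((ℓ : ℕ) : ℂ) ^ (-s)) ^ 2 *
          (1 - χ ((ℓ : ℕ) : ZMod Nχ) * β (ℓ : ℕ) ^ 2 * ((ℓ : ℕ) : ℂ) ^ (-s)))⁻¹) ∧
    Summable (fun n : ℕ+ =>
      ‖a (n : ℕ) ^ 2 * χ ((n : ℕ) : ZMod Nχ) * ((n : ℕ) : ℂ) ^ (-s)‖) ∧
    (∑' n : ℕ+, a (n : ℕ) ^ 2 * χ ((n : ℕ) : ZMod Nχ) * ((n : ℕ) : ℂ) ^ (-s)) =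
    ∏' ℓ : Nat.Primes,
      (1 - χ ((ℓ : ℕ) : ZMod Nχ) ^ 2 * (α (ℓ : ℕ) ^ 2 * β (ℓ : ℕ) ^ 2) *
          ((ℓ : ℕ) : ℂ) ^ (-(2 * s))) *
        ((1 - χ ((ℓ : ℕ) : ZMod Nχ) * α (ℓ : ℕ) ^ 2 * ((ℓ : ℕ) : ℂ) ^ (-s)) *
          (1 - χ ((ℓ : ℕ) : ZMod Nχ) * (α (ℓ : ℕ) * β (ℓ : ℕ)) * ((ℓ : ℕ) : ℂ) ^ (-s)) ^ 2 *
          (1 - χ ((ℓ : ℕ) : ZMod Nχ) * β (ℓ : ℕ) ^ 2 * ((ℓ : ℕ) : ℂ) ^ (-s)))⁻¹ := by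
  classical
  set F : ℕ → ℂ := fun n => if n = 0 then 0 else a n ^ 2 * χ (n : ZMod Nχ) * (n : ℂ) ^ (-s)
    with hF
  have hF0 : F 0 = 0 := by simp [hF]
  have hFpos : ∀ n : ℕ, n ≠ 0 → F n = a n ^ 2 * χ (n : ZMod Nχ) * (n : ℂ) ^ (-s) := by
    intro n h; simp [hF, h]
  have hF1 : F 1 = 1 := by
    rw [hFpos 1 one_ne_zero, ha1]
    simp
  have hFmul : ∀ {m n : ℕ}, Nat.Coprime m n → F (m * n) = F m * F n := by
    intro m n hmn
    rcases eq_or_ne m 0 with rfl | hm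
    · have h1 : n = 1 := by simpa using hmn
      subst h1; simp [hF0, hF1]
    rcases eq_or_ne n 0 with rfl | hn
    · have h1 : m = 1 := by simpa using hmn
      subst h1; simp [hF0, hF1]
    · rw [hFpos _ (Nat.mul_ne_zero hm hn), hFpos m hm, hFpos n hn,
        haM m n (Nat.pos_of_ne_zero hm) (Nat.pos_of_ne_zero hn) hmn]
      have hc : ((m * n : ℕ) : ZMod Nχ) = (m : ZMod Nχ) * (n : ZMod Nχ) := by push_cast; ring
      have hcp : ((m * n : ℕ) : ℂ) ^ (-s) = (m : ℂ) ^ (-s) * (n : ℂ) ^ (-s) := by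
        rw [Nat.cast_mul, Complex.natCast_mul_natCast_cpow]
      rw [hc, map_mul, hcp]; ring
  -- constants
  have hk1 : (0 : ℝ) ≤ (k : ℝ) - 1 := by
    have : (1 : ℝ) ≤ (k : ℝ) := by exact_mod_cast hk
    linarith
  set t : ℝ := s.re - ((k : ℝ) - 1) with ht
  have ht1 : 1 < t := by rw [ht]; linarith
  have h2t : (2 : ℝ) ^ (-t) < 1 / 2 := by
    have h := Real.rpow_lt_rpow_of_exponent_lt (x := 2) one_lt_two (by linarith : -t < -1)
    rwa [Real.rpow_neg_one, ← one_div] at h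
  set d : ℝ := 1 - 2 * (2 : ℝ) ^ (-t) with hd
  have hd0 : 0 < d := by rw [hd]; linarith
  set C : ℝ := 12 / d with hC
  have hC0 : 0 < C := by positivity
  -- the key local analysis at each prime
  have key : ∀ p : ℕ, p.Prime →
      Summable (fun e : ℕ => ‖F (p ^ e)‖) ∧
      (∑' e : ℕ, ‖F (p ^ e)‖) ≤ 1 + C * (p : ℝ) ^ (-t) ∧
      (∑' e : ℕ, F (p ^ e)) =
        (1 - χ (p : ZMod Nχ) ^ 2 * (α p ^ 2 * β p ^ 2) * (p : ℂ) ^ (-(2 * s))) *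
          ((1 - χ (p : ZMod Nχ) * α p ^ 2 * (p : ℂ) ^ (-s)) *
            (1 - χ (p : ZMod Nχ) * (α p * β p) * (p : ℂ) ^ (-s)) ^ 2 *
            (1 - χ (p : ZMod Nχ) * β p ^ 2 * (p : ℂ) ^ (-s)))⁻¹ := by
    intro p hp
    have hL2 : (2 : ℝ) ≤ (p : ℝ) := by exact_mod_cast hp.two_le
    have hL0 : (0 : ℝ) < (p : ℝ) := by linarith
    set A : ℂ := α p with hA
    set B : ℂ := β p with hB
    set c : ℂ := χ (p : ZMod Nχ) with hcχ
    set y : ℂ := (p : ℂ) ^ (-s) with hy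
    set x : ℂ := c * y with hx
    set u : ℕ → ℂ := fun r => ∑ i ∈ Finset.range (r + 1), A ^ i * B ^ (r - i) with hu
    have hu0 : u 0 = 1 := by simp [hu]
    have hu1 : u 1 = A + B := by
      simp [hu, Finset.sum_range_succ]
      ring
    have hustep : ∀ m : ℕ, u (m + 1) = B * u m + A ^ (m + 1) := by
      intro m
      rw [show u (m + 1) = ∑ i ∈ Finset.range (m + 1 + 1), A ^ i * B ^ (m + 1 - i) from rfl,
        Finset.sum_range_succ]
      have hcong : ∀ i ∈ Finset.range (m + 1), A ^ i * B ^ (m + 1 - i) =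
          B * (A ^ i * B ^ (m - i)) := by
        intro i hi
        rw [Finset.mem_range] at hi
        rw [show m + 1 - i = (m - i) + 1 by omega, pow_succ]
        ring
      rw [Finset.sum_congr rfl hcong, ← Finset.mul_sum]
      simp [hu, Nat.sub_self]
    have hrec : ∀ m : ℕ, u (m + 2) = (A + B) * u (m + 1) - A * B * u m := by
      intro m
      have h1 : u (m + 2) = B * u (m + 1) + A ^ (m + 2) := hustep (m + 1)
      have h2 : u (m + 1) = B * u m + A ^ (m + 1) := hustep m
      rw [h1]
      linear_combination (-A) * h2
    have hau : ∀ r : ℕ, a (p ^ r) = u r := by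
      intro r
      cases r with
      | zero => simpa [hu] using ha1
      | succ n => exact haP p hp (n + 1) (by omega)
    -- norm bounds
    set M : ℝ := (p : ℝ) ^ (((k : ℝ) - 1) / 2) with hM
    have hM0 : 0 ≤ M := Real.rpow_nonneg hL0.le _
    have hAn : ‖A‖ ≤ M := by exact hα p hp
    have hBn : ‖B‖ ≤ M := by exact hβ p hp
    have hMM : M ^ 2 = (p : ℝ) ^ ((k : ℝ) - 1) := by
      rw [hM, ← Real.rpow_natCast _ 2, ← Real.rpow_mul hL0.le]
      norm_num
    have hyn : ‖y‖ = (p : ℝ) ^ (-s.re) := by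
      rw [hy, Complex.norm_natCast_cpow_of_pos hp.pos]
      simp
    have hc1 : ‖c‖ ≤ 1 := DirichletCharacter.norm_le_one χ _
    have hxn : ‖x‖ ≤ (p : ℝ) ^ (-s.re) := by
      rw [hx, norm_mul, hyn]
      exact mul_le_of_le_one_left (Real.rpow_nonneg hL0.le _) hc1
    set Q : ℝ := (p : ℝ) ^ (-t) with hQ
    have hQ0 : 0 ≤ Q := Real.rpow_nonneg hL0.le _
    have hQle : Q ≤ (2 : ℝ) ^ (-t) := by
      rw [hQ, Real.rpow_neg hL0.le, Real.rpow_neg (by norm_num : (0:ℝ) ≤ 2)]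
      have h1 : (2 : ℝ) ^ t ≤ (p : ℝ) ^ t := Real.rpow_le_rpow (by norm_num) hL2 (by linarith)
      have h2 : (0 : ℝ) < (2 : ℝ) ^ t := Real.rpow_pos_of_pos two_pos t
      exact inv_anti₀ h2 h1
    have h2Q1 : 2 * Q < 1 := by linarith
    have hMQ : M ^ 2 * (p : ℝ) ^ (-s.re) = Q := by
      rw [hMM, hQ, ← Real.rpow_add hL0]
      congr 1
      rw [ht]; ring
    have hunorm : ∀ r : ℕ, ‖u r‖ ≤ ((r : ℝ) + 1) * M ^ r := by
      intro r
      calc ‖u r‖ ≤ ∑ i ∈ Finset.range (r + 1), ‖A ^ i * B ^ (r - i)‖ := norm_sum_le _ _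
        _ ≤ ∑ _i ∈ Finset.range (r + 1), M ^ r := by
            apply Finset.sum_le_sum
            intro i hi
            rw [Finset.mem_range] at hi
            rw [norm_mul, norm_pow, norm_pow]
            calc ‖A‖ ^ i * ‖B‖ ^ (r - i) ≤ M ^ i * M ^ (r - i) := by
                  apply mul_le_mul (pow_le_pow_left₀ (norm_nonneg _) hAn i)
                    (pow_le_pow_left₀ (norm_nonneg _) hBn _) (by positivity) (by positivity)
              _ = M ^ r := by rw [← pow_add]; congr 1; omega
        _ = ((r : ℝ) + 1) * M ^ r := by
            rw [Finset.sum_const, Finset.card_range, nsmul_eq_mul]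
            push_cast; ring
    have hxpow : ∀ e : ℕ, F (p ^ e) = u e ^ 2 * x ^ e := by
      intro e
      have hne : p ^ e ≠ 0 := pow_ne_zero e hp.pos.ne'
      rw [hFpos _ hne, hau e]
      have h1 : ((p ^ e : ℕ) : ZMod Nχ) = ((p : ZMod Nχ)) ^ e := by push_cast; ring
      have h2 : ((p ^ e : ℕ) : ℂ) = ((p : ℂ)) ^ e := by push_cast; ring
      rw [h1, map_pow, h2, ← Complex.natCast_cpow_natCast_mul, Complex.cpow_nat_mul,
        hx, mul_pow]
      ring
    have hcol : ∀ e : ℕ, ‖F (p ^ e)‖ ≤ ((e : ℝ) + 1) ^ 2 * Q ^ e := by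
      intro e
      rw [hxpow e, norm_mul, norm_pow, norm_pow]
      calc ‖u e‖ ^ 2 * ‖x‖ ^ e ≤ (((e : ℝ) + 1) * M ^ e) ^ 2 * ((p : ℝ) ^ (-s.re)) ^ e := by
            apply mul_le_mul (pow_le_pow_left₀ (norm_nonneg _) (hunorm e) 2)
              (pow_le_pow_left₀ (norm_nonneg _) hxn e) (by positivity) (by positivity)
        _ = ((e : ℝ) + 1) ^ 2 * (M ^ 2 * (p : ℝ) ^ (-s.re)) ^ e := by
            rw [mul_pow, mul_pow, ← pow_mul, ← pow_mul]
            ring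
        _ = ((e : ℝ) + 1) ^ 2 * Q ^ e := by rw [hMQ]
    have hsqle : ∀ e : ℕ, ((e : ℝ) + 1) ^ 2 ≤ 12 * 2 ^ e := by
      intro e
      have h1 : ((e : ℝ) + 1) ^ 2 ≤ ((e : ℝ) + 2) ^ 2 := by nlinarith [Nat.cast_nonneg (α := ℝ) e]
      exact h1.trans (rsaux_sq_le e)
    have hgeo : Summable (fun e : ℕ => 12 * (2 * Q) ^ e) :=
      (summable_geometric_of_lt_one (by positivity) h2Q1).mul_left _
    have hcolsummable : Summable (fun e : ℕ => ‖F (p ^ e)‖) := by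
      apply Summable.of_nonneg_of_le (fun e => norm_nonneg _) (fun e => ?_) hgeo
      calc ‖F (p ^ e)‖ ≤ ((e : ℝ) + 1) ^ 2 * Q ^ e := hcol e
        _ ≤ 12 * 2 ^ e * Q ^ e :=
            mul_le_mul_of_nonneg_right (hsqle e) (by positivity)
        _ = 12 * (2 * Q) ^ e := by rw [mul_pow]; ring
    refine ⟨hcolsummable, ?_, ?_⟩
    · -- the tsum bound
      rw [Summable.tsum_eq_zero_add hcolsummable]
      have h0 : ‖F (p ^ 0)‖ = 1 := by rw [pow_zero, hF1, norm_one]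
      rw [h0]
      have htail : ∀ e : ℕ, ‖F (p ^ (e + 1))‖ ≤ 12 * Q * (2 * Q) ^ e := by
        intro e
        have h1 := hcol (e + 1)
        push_cast at h1
        have h2 : ((e : ℝ) + 1 + 1) ^ 2 ≤ 12 * 2 ^ e := by
          have := rsaux_sq_le e
          calc ((e : ℝ) + 1 + 1) ^ 2 = ((e : ℝ) + 2) ^ 2 := by ring
            _ ≤ 12 * 2 ^ e := rsaux_sq_le e
        calc ‖F (p ^ (e + 1))‖ ≤ ((e : ℝ) + 1 + 1) ^ 2 * Q ^ (e + 1) := h1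
          _ ≤ 12 * 2 ^ e * Q ^ (e + 1) := mul_le_mul_of_nonneg_right h2 (by positivity)
          _ = 12 * Q * (2 * Q) ^ e := by rw [mul_pow, pow_succ]; ring
      have hsum1 : Summable (fun e : ℕ => ‖F (p ^ (e + 1))‖) :=
        hcolsummable.comp_injective (add_left_injective 1)
      have hsum2 : Summable (fun e : ℕ => 12 * Q * (2 * Q) ^ e) :=
        (summable_geometric_of_lt_one (by positivity) h2Q1).mul_left _
      have h1 : (∑' e : ℕ, ‖F (p ^ (e + 1))‖) ≤ ∑' e : ℕ, 12 * Q * (2 * Q) ^ e :=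
        Summable.tsum_le_tsum htail hsum1 hsum2
      have h2 : (∑' e : ℕ, 12 * Q * (2 * Q) ^ e) = 12 * Q * (1 - 2 * Q)⁻¹ := by
        rw [tsum_mul_left, tsum_geometric_of_lt_one (by positivity) h2Q1]
      have h3 : 12 * Q * (1 - 2 * Q)⁻¹ ≤ C * Q := by
        have hdle : d ≤ 1 - 2 * Q := by rw [hd]; linarith
        have h12Q : (0 : ℝ) < 1 - 2 * Q := by linarith
        have hinv : (1 - 2 * Q)⁻¹ ≤ d⁻¹ := inv_anti₀ hd0 hdle
        calc 12 * Q * (1 - 2 * Q)⁻¹ ≤ 12 * Q * d⁻¹ :=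
              mul_le_mul_of_nonneg_left hinv (by positivity)
          _ = C * Q := by rw [hC, div_eq_mul_inv]; ring
      linarith [h1, h2.le, h2.ge, h3]
    · -- the local value
      have hSsum : HasSum (fun e : ℕ => u e ^ 2 * x ^ e) (∑' e : ℕ, F (p ^ e)) := by
        have h2 : (fun e : ℕ => F (p ^ e)) = fun e => u e ^ 2 * x ^ e := funext hxpow
        rw [← h2]
        exact (hcolsummable.of_norm).hasSum
      have hkey := rsaux_local A B x _ u hu0 hu1 hrec hSsum
      -- nonvanishing
      have hQ1 : Q < 1 := by linarith
      have hfac : ∀ z : ℂ, ‖z‖ ≤ M ^ 2 → ‖z * x‖ < 1 := by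
        intro z hz
        rw [norm_mul]
        calc ‖z‖ * ‖x‖ ≤ M ^ 2 * (p : ℝ) ^ (-s.re) :=
              mul_le_mul hz hxn (norm_nonneg _) (by positivity)
          _ = Q := hMQ
          _ < 1 := hQ1
      have hA2 : ‖A ^ 2‖ ≤ M ^ 2 := by
        rw [norm_pow]; exact pow_le_pow_left₀ (norm_nonneg _) hAn 2
      have hB2 : ‖B ^ 2‖ ≤ M ^ 2 := by
        rw [norm_pow]; exact pow_le_pow_left₀ (norm_nonneg _) hBn 2
      have hAB : ‖A * B‖ ≤ M ^ 2 := by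
        rw [norm_mul, sq]
        exact mul_le_mul hAn hBn (norm_nonneg _) hM0
      have hne1 : (1 : ℂ) - A ^ 2 * x ≠ 0 := rsaux_one_sub_ne (hfac _ hA2)
      have hne2 : (1 : ℂ) - A * B * x ≠ 0 := rsaux_one_sub_ne (hfac _ hAB)
      have hne3 : (1 : ℂ) - B ^ 2 * x ≠ 0 := rsaux_one_sub_ne (hfac _ hB2)
      have hD : (1 - A ^ 2 * x) * (1 - A * B * x) * (1 - B ^ 2 * x) ≠ 0 :=
        mul_ne_zero (mul_ne_zero hne1 hne2) hne3
      have hSval : (∑' e : ℕ, F (p ^ e)) =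
          (1 + A * B * x) * ((1 - A ^ 2 * x) * (1 - A * B * x) * (1 - B ^ 2 * x))⁻¹ :=
        (eq_mul_inv_iff_mul_eq₀ hD).mpr hkey
      rw [hSval]
      have h2s : (p : ℂ) ^ (-(2 * s)) = y ^ 2 := by
        rw [hy, show -(2 * s) = ((2 : ℕ) : ℂ) * (-s) by push_cast; ring, Complex.cpow_nat_mul]
      rw [h2s]
      have e1 : c ^ 2 * (A ^ 2 * B ^ 2) * y ^ 2 = (A * B * x) ^ 2 := by rw [hx]; ring
      have e2 : c * A ^ 2 * y = A ^ 2 * x := by rw [hx]; ring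
      have e3 : c * (A * B) * y = A * B * x := by rw [hx]; ring
      have e4 : c * B ^ 2 * y = B ^ 2 * x := by rw [hx]; ring
      rw [e1, e2, e3, e4]
      rw [eq_comm, mul_inv_eq_iff_eq_mul₀ (by
        exact mul_ne_zero (mul_ne_zero hne1 (pow_ne_zero 2 hne2)) hne3)]
      field_simp
      ring
  -- global summability
  have hZsum : Summable (fun n : ℕ => (n : ℝ) ^ (-t)) :=
    Real.summable_nat_rpow.mpr (by linarith)
  set Z : ℝ := ∑' n : ℕ, (n : ℝ) ^ (-t) with hZ
  have hnormsummable : Summable (fun n : ℕ => ‖F n‖) := by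
    apply summable_of_sum_le (fun n => norm_nonneg _)
    intro T
    set s' : Finset ℕ := Finset.range (T.sup id + 1) with hs'
    have hinc : ∀ n ∈ T, n ≠ 0 → n ∈ Nat.factoredNumbers s' := by
      intro n hn hn0
      rw [Nat.mem_factoredNumbers_iff_forall_le]
      refine ⟨hn0, fun q hq _ _ => Finset.mem_range.mpr ?_⟩
      have : n ≤ T.sup id := Finset.le_sup (f := id) hn
      omega
    have hsub := EulerProduct.summable_and_hasSum_factoredNumbers_prod_filter_prime_tsum
      (f := fun n => ‖F n‖) (by simp [hF1]) (fun {m n} h => show ‖F (m * n)‖ = ‖F m‖ * ‖F n‖ by rw [hFmul h, norm_mul])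
      (fun {q} hq => by simpa only [norm_norm] using (key q hq).1) s'
    calc ∑ n ∈ T, ‖F n‖ = ∑ n ∈ T.erase 0, ‖F n‖ :=
          (Finset.sum_erase T (by simp [hF0])).symm
      _ ≤ ∏ q ∈ s'.filter Nat.Prime, ∑' e : ℕ, ‖F (q ^ e)‖ := by
          rw [← hsub.2.tsum_eq]
          have heq := Finset.sum_subtype_eq_sum_filter (s := T.erase 0) (fun n => ‖F n‖)
            (p := (· ∈ Nat.factoredNumbers s'))
          rw [Finset.filter_true_of_mem
            (fun n hn => hinc n (Finset.mem_of_mem_erase hn) (Finset.ne_of_mem_erase hn))] at heq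
          rw [← heq]
          exact Summable.sum_le_tsum _ (fun m _ => norm_nonneg _) hsub.2.summable
      _ ≤ Real.exp (C * Z) := by
          calc ∏ q ∈ s'.filter Nat.Prime, ∑' e : ℕ, ‖F (q ^ e)‖
              ≤ ∏ q ∈ s'.filter Nat.Prime, Real.exp (C * (q : ℝ) ^ (-t)) := by
                apply Finset.prod_le_prod (fun q _ => tsum_nonneg (fun e => norm_nonneg _))
                intro q hq
                have hqp : q.Prime := (Finset.mem_filter.mp hq).2
                calc (∑' e : ℕ, ‖F (q ^ e)‖) ≤ 1 + C * (q : ℝ) ^ (-t) := (key q hqp).2.1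
                  _ ≤ Real.exp (C * (q : ℝ) ^ (-t)) := by
                      have := Real.add_one_le_exp (C * (q : ℝ) ^ (-t))
                      linarith
            _ = Real.exp (∑ q ∈ s'.filter Nat.Prime, C * (q : ℝ) ^ (-t)) :=
                (Real.exp_sum _ _).symm
            _ ≤ Real.exp (C * Z) := by
                apply Real.exp_le_exp.mpr
                rw [← Finset.mul_sum]
                apply mul_le_mul_of_nonneg_left _ hC0.le
                exact Summable.sum_le_tsum _ (fun n _ => Real.rpow_nonneg (Nat.cast_nonneg n) _) hZsum
  -- conclude
  have hprod := EulerProduct.eulerProduct_hasProd hF1 hFmul hnormsummable hF0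
  have htprod := EulerProduct.eulerProduct_tprod hF1 hFmul hnormsummable hF0
  refine ⟨?_, ?_, ?_⟩
  · have hM := hprod.multipliable
    refine hM.congr (fun p => ?_)
    exact (key (p : ℕ) p.prop).2.2
  · have h1 : Summable (fun n : ℕ+ => ‖F (n : ℕ)‖) :=
      hnormsummable.comp_injective (fun m n h => PNat.coe_injective h)
    refine h1.congr (fun n => ?_)
    rw [hFpos (n : ℕ) n.pos.ne']
  · have h1 : (∑' n : ℕ+, a (n : ℕ) ^ 2 * χ ((n : ℕ) : ZMod Nχ) * ((n : ℕ) : ℂ) ^ (-s)) =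
        ∑' n : ℕ+, F (n : ℕ) := tsum_congr (fun n => (hFpos (n : ℕ) n.pos.ne').symm)
    have h2 : (∑' n : ℕ+, F (n : ℕ)) = ∑' n : ℕ, F n := by
      apply Function.Injective.tsum_eq (fun m n h => PNat.coe_injective h)
      intro n hn
      rcases Nat.eq_zero_or_pos n with rfl | hpos
      · exact absurd hF0 hn
      · exact ⟨⟨n, hpos⟩, rfl⟩
    rw [h1, h2, ← htprod]
    exact tprod_congr (fun p => (key (p : ℕ) p.prop).2.2)
end

section
/- Let p ≥ 7 be a prime. Then the first group cohomology H¹(SL₂(𝔽_p), sl₂(𝔽_p)) vanishes, where sl₂(𝔽_p) is the 3-dimensional 𝔽_p-vector space of 2×2 trace-zero matrices over 𝔽_p, equipped with the SL₂(𝔽_p)-action by conjugation g • A = g A g⁻¹. -/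
open Matrix

/-- The 3-dimensional `𝔽_p`-vector space `sl₂(𝔽_p)` of trace-zero `2 × 2` matrices. -/
noncomputable def sl2 (p : ℕ) : Submodule (ZMod p) (Matrix (Fin 2) (Fin 2) (ZMod p)) :=
  LinearMap.ker (Matrix.traceLinearMap (Fin 2) (ZMod p) (ZMod p))

/-- Conjugation `A ↦ g A g⁻¹` on the full matrix algebra, as a linear map. -/
noncomputable def conjFull (p : ℕ) (g : SpecialLinearGroup (Fin 2) (ZMod p)) :
    Matrix (Fin 2) (Fin 2) (ZMod p) →ₗ[ZMod p] Matrix (Fin 2) (Fin 2) (ZMod p) :=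
  (LinearMap.mulLeft (ZMod p) (g : Matrix (Fin 2) (Fin 2) (ZMod p))).comp
    (LinearMap.mulRight (ZMod p) ((g⁻¹ : SpecialLinearGroup (Fin 2) (ZMod p)) :
      Matrix (Fin 2) (Fin 2) (ZMod p)))

lemma conjFull_mem_sl2 (p : ℕ) (g : SpecialLinearGroup (Fin 2) (ZMod p))
    (A : Matrix (Fin 2) (Fin 2) (ZMod p)) (hA : A ∈ sl2 p) : conjFull p g A ∈ sl2 p := by
  simp only [sl2, LinearMap.mem_ker, Matrix.traceLinearMap] at hA ⊢
  simp only [conjFull, LinearMap.coe_comp, Function.comp_apply, LinearMap.mulLeft_apply,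
    LinearMap.mulRight_apply, LinearMap.coe_mk, AddHom.coe_mk] at hA ⊢
  rw [Matrix.trace_mul_comm, mul_assoc, ← Matrix.SpecialLinearGroup.coe_mul,
    inv_mul_cancel, Matrix.SpecialLinearGroup.coe_one, mul_one, hA]

/-- The conjugation representation of `SL₂(𝔽_p)` on `sl₂(𝔽_p)`. -/
noncomputable def sl2Rep (p : ℕ) :
    Representation (ZMod p) (SpecialLinearGroup (Fin 2) (ZMod p)) (sl2 p) where
  toFun g := (conjFull p g).restrict (fun A hA => conjFull_mem_sl2 p g A hA)
  map_one' := by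
    ext A
    simp [conjFull, LinearMap.restrict_apply]
  map_mul' g h := by
    ext A
    simp [conjFull, LinearMap.restrict_apply, _root_.mul_inv_rev, mul_assoc]

abbrev SL (p : ℕ) := SpecialLinearGroup (Fin 2) (ZMod p)

namespace SL2Aux

variable {p : ℕ}

def Um (x : ZMod p) : SL p := ⟨!![1, x; 0, 1], by simp [Matrix.det_fin_two_of]⟩
def Lm (y : ZMod p) : SL p := ⟨!![1, 0; y, 1], by simp [Matrix.det_fin_two_of]⟩
def Dm (u : (ZMod p)ˣ) : SL p :=
  ⟨!![(u : ZMod p), 0; 0, ((u⁻¹ : (ZMod p)ˣ) : ZMod p)], by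
    simp [Matrix.det_fin_two_of, Units.mul_inv]⟩

lemma Um_coe (x : ZMod p) : (Um x : Matrix (Fin 2) (Fin 2) (ZMod p)) = !![1, x; 0, 1] := rfl
lemma Lm_coe (y : ZMod p) : (Lm y : Matrix (Fin 2) (Fin 2) (ZMod p)) = !![1, 0; y, 1] := rfl
lemma Dm_coe (u : (ZMod p)ˣ) : (Dm u : Matrix (Fin 2) (Fin 2) (ZMod p)) =
    !![(u : ZMod p), 0; 0, ((u⁻¹ : (ZMod p)ˣ) : ZMod p)] := rfl

lemma Um_mul (x y : ZMod p) : Um x * Um y = Um (x + y) := by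
  apply Subtype.ext
  show (Um x : Matrix (Fin 2) (Fin 2) (ZMod p)) * Um y = Um (x + y)
  rw [Um_coe, Um_coe, Um_coe]
  ext i j
  fin_cases i <;> fin_cases j <;> (simp [Matrix.mul_apply, Fin.sum_univ_two]; try ring)

lemma Lm_mul (x y : ZMod p) : Lm x * Lm y = Lm (x + y) := by
  apply Subtype.ext
  show (Lm x : Matrix (Fin 2) (Fin 2) (ZMod p)) * Lm y = Lm (x + y)
  rw [Lm_coe, Lm_coe, Lm_coe]
  ext i j
  fin_cases i <;> fin_cases j <;> simp [Matrix.mul_apply, Fin.sum_univ_two]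

lemma Dm_mul (u v : (ZMod p)ˣ) : Dm u * Dm v = Dm (u * v) := by
  apply Subtype.ext
  show (Dm u : Matrix (Fin 2) (Fin 2) (ZMod p)) * Dm v = Dm (u * v)
  rw [Dm_coe, Dm_coe, Dm_coe]
  ext i j
  fin_cases i <;> fin_cases j <;>
    simp [Matrix.mul_apply, Fin.sum_univ_two, mul_comm]

lemma Um_zero : (Um 0 : SL p) = 1 := by
  apply Subtype.ext
  show (Um (0 : ZMod p) : Matrix (Fin 2) (Fin 2) (ZMod p)) = 1
  rw [Um_coe, Matrix.one_fin_two]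

lemma Lm_zero : (Lm 0 : SL p) = 1 := by
  apply Subtype.ext
  show (Lm (0 : ZMod p) : Matrix (Fin 2) (Fin 2) (ZMod p)) = 1
  rw [Lm_coe, Matrix.one_fin_two]

lemma Dm_one : (Dm 1 : SL p) = 1 := by
  apply Subtype.ext
  show (Dm (1 : (ZMod p)ˣ) : Matrix (Fin 2) (Fin 2) (ZMod p)) = 1
  rw [Dm_coe, Matrix.one_fin_two]
  simp

lemma Um_inv (x : ZMod p) : (Um x)⁻¹ = Um (-x) :=
  inv_eq_of_mul_eq_one_right (by rw [Um_mul, add_neg_cancel, Um_zero])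

lemma Lm_inv (y : ZMod p) : (Lm y)⁻¹ = Lm (-y) :=
  inv_eq_of_mul_eq_one_right (by rw [Lm_mul, add_neg_cancel, Lm_zero])

lemma Dm_inv (u : (ZMod p)ˣ) : (Dm u)⁻¹ = Dm u⁻¹ :=
  inv_eq_of_mul_eq_one_right (by rw [Dm_mul, mul_inv_cancel, Dm_one])

lemma conj_apply (g : SL p) (X : Matrix (Fin 2) (Fin 2) (ZMod p)) :
    conjFull p g X = (g : Matrix (Fin 2) (Fin 2) (ZMod p)) *
      (X * ((g⁻¹ : SL p) : Matrix (Fin 2) (Fin 2) (ZMod p))) := rfl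

lemma conj_one (X : Matrix (Fin 2) (Fin 2) (ZMod p)) : conjFull p 1 X = X := by
  rw [conj_apply]
  simp

lemma conj_mul (g h : SL p) (X : Matrix (Fin 2) (Fin 2) (ZMod p)) :
    conjFull p (g * h) X = conjFull p g (conjFull p h X) := by
  simp only [conj_apply, _root_.mul_inv_rev, Matrix.SpecialLinearGroup.coe_mul]
  simp only [mul_assoc]

lemma conj_conj_inv (g : SL p) (X : Matrix (Fin 2) (Fin 2) (ZMod p)) :
    conjFull p g⁻¹ (conjFull p g X) = X := by
  rw [← conj_mul, inv_mul_cancel, conj_one]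

lemma trace_conj (g : SL p) (X : Matrix (Fin 2) (Fin 2) (ZMod p)) :
    Matrix.trace (conjFull p g X) = Matrix.trace X := by
  rw [conj_apply, ← mul_assoc, Matrix.trace_mul_comm, ← mul_assoc,
    ← Matrix.SpecialLinearGroup.coe_mul, inv_mul_cancel,
    Matrix.SpecialLinearGroup.coe_one, one_mul]

lemma conj_U (x : ZMod p) (X : Matrix (Fin 2) (Fin 2) (ZMod p)) :
    conjFull p (Um x) X =
      !![X 0 0 + x * X 1 0, X 0 1 + x * (X 1 1 - X 0 0) - x ^ 2 * X 1 0;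
         X 1 0, X 1 1 - x * X 1 0] := by
  rw [conj_apply, Um_inv, Um_coe, Um_coe]
  ext i j
  fin_cases i <;> fin_cases j <;>
    simp [Matrix.mul_apply, Fin.sum_univ_two] <;> ring

lemma conj_L (y : ZMod p) (X : Matrix (Fin 2) (Fin 2) (ZMod p)) :
    conjFull p (Lm y) X =
      !![X 0 0 - y * X 0 1, X 0 1;
         y * X 0 0 + X 1 0 - y * (y * X 0 1 + X 1 1), y * X 0 1 + X 1 1] := by
  rw [conj_apply, Lm_inv, Lm_coe, Lm_coe]
  ext i j
  fin_cases i <;> fin_cases j <;>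
    simp [Matrix.mul_apply, Fin.sum_univ_two] <;> ring

lemma conj_D (u : (ZMod p)ˣ) (X : Matrix (Fin 2) (Fin 2) (ZMod p)) :
    conjFull p (Dm u) X =
      !![X 0 0, (u : ZMod p) ^ 2 * X 0 1;
         ((u⁻¹ : (ZMod p)ˣ) : ZMod p) ^ 2 * X 1 0, X 1 1] := by
  have hu : (u : ZMod p) * ((u⁻¹ : (ZMod p)ˣ) : ZMod p) = 1 := Units.mul_inv u
  rw [conj_apply, Dm_inv, Dm_coe, Dm_coe, inv_inv]
  ext i j
  fin_cases i <;> fin_cases j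
  · simp [Matrix.mul_apply, Fin.sum_univ_two]
    linear_combination (X 0 0) * hu
  · simp [Matrix.mul_apply, Fin.sum_univ_two]; ring
  · simp [Matrix.mul_apply, Fin.sum_univ_two]; ring
  · simp [Matrix.mul_apply, Fin.sum_univ_two]
    linear_combination (X 1 1) * hu


lemma add_lin {p : ℕ} (hp : p.Prime) (f : ZMod p → ZMod p)
    (hf : ∀ x y, f (x + y) = f x + f y) (x : ZMod p) : f x = f 1 * x := by
  haveI : NeZero p := ⟨hp.ne_zero⟩
  have h0 : f 0 = 0 := by
    have h := hf 0 0
    rw [add_zero] at h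
    exact (left_eq_add.mp h)
  have hn : ∀ n : ℕ, f n = f 1 * n := by
    intro n
    induction n with
    | zero => simpa using h0
    | succ n ih =>
      push_cast
      rw [hf, ih]
      ring
  have hx : ((x.val : ℕ) : ZMod p) = x := ZMod.natCast_rightInverse x
  rw [← hx]
  exact hn x.val

lemma sub_cob {p : ℕ} {C : SL p → Matrix (Fin 2) (Fin 2) (ZMod p)}
    (hC : ∀ g h, C (g * h) = conjFull p g (C h) + C g)
    (B : Matrix (Fin 2) (Fin 2) (ZMod p)) (g h : SL p) :
    C (g * h) - (conjFull p (g * h) B - B) =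
      conjFull p g (C h - (conjFull p h B - B)) + (C g - (conjFull p g B - B)) := by
  rw [hC, conj_mul, map_sub, map_sub]
  abel

lemma congr_entry {p : ℕ} {M N : Matrix (Fin 2) (Fin 2) (ZMod p)} (h : M = N) (i j : Fin 2) :
    M i j = N i j := by rw [h]

set_option maxRecDepth 8000 in
set_option maxHeartbeats 3200000 in
lemma key (p : ℕ) (hp : p.Prime) (hp7 : 7 ≤ p)
    (C : SL p → Matrix (Fin 2) (Fin 2) (ZMod p))
    (hC : ∀ g h, C (g * h) = conjFull p g (C h) + C g)
    (htr : ∀ g, Matrix.trace (C g) = 0) :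
    ∃ B, Matrix.trace B = 0 ∧ ∀ g, C g = conjFull p g B - B := by
  haveI := Fact.mk hp
  haveI : NeZero p := ⟨hp.ne_zero⟩
  have h2 : (2 : ZMod p) ≠ 0 := by
    intro h
    have h' : ((2 : ℕ) : ZMod p) = 0 := by exact_mod_cast h
    rw [ZMod.natCast_eq_zero_iff] at h'
    have := Nat.le_of_dvd (by norm_num) h'
    omega
  obtain ⟨ζ, hζ⟩ := IsCyclic.exists_generator (α := (ZMod p)ˣ)
  have hord : orderOf ζ = p - 1 := by
    rw [orderOf_eq_card_of_forall_mem_zpowers hζ, Nat.card_eq_fintype_card, ZMod.card_units]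
  set r : ZMod p := (ζ : ZMod p) with hrdef
  set r' : ZMod p := ((ζ⁻¹ : (ZMod p)ˣ) : ZMod p) with hr'def
  have hrr' : r * r' = 1 := Units.mul_inv ζ
  have hrpow : ∀ n : ℕ, ζ ^ n = 1 → (p - 1) ∣ n := fun n h =>
    hord ▸ orderOf_dvd_of_pow_eq_one h
  have hr2 : r ^ 2 ≠ 1 := by
    intro h
    have h' : ζ ^ 2 = 1 := Units.ext (by
      simp only [Units.val_pow_eq_pow_val, Units.val_one]; exact h)
    have := Nat.le_of_dvd (by norm_num) (hrpow 2 h')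
    omega
  have hr4 : r ^ 4 ≠ 1 := by
    intro h
    have h' : ζ ^ 4 = 1 := Units.ext (by
      simp only [Units.val_pow_eq_pow_val, Units.val_one]; exact h)
    have := Nat.le_of_dvd (by norm_num) (hrpow 4 h')
    omega
  have hrsq : r ^ 2 * r' ^ 2 = 1 := by rw [← mul_pow, hrr', one_pow]
  have hr'2 : r' ^ 2 ≠ 1 := by
    intro h
    apply hr2
    rw [h, mul_one] at hrsq
    exact hrsq
  have hr21 : r ^ 2 - 1 ≠ 0 := sub_ne_zero.2 hr2
  have hr'21 : r' ^ 2 - 1 ≠ 0 := sub_ne_zero.2 hr'2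
  have hr24 : r ^ 2 - r' ^ 2 ≠ 0 := by
    intro h
    apply hr4
    linear_combination r ^ 2 * h + hrsq
  have hDmcoe : ((Dm ζ : SL p) : Matrix (Fin 2) (Fin 2) (ZMod p)) = !![r, 0; 0, r'] := rfl
  have hDmcoe' : ((Dm ζ⁻¹ : SL p) : Matrix (Fin 2) (Fin 2) (ZMod p)) = !![r', 0; 0, r] := by
    rw [Dm_coe, inv_inv]
  have hconjDζ : ∀ X : Matrix (Fin 2) (Fin 2) (ZMod p), conjFull p (Dm ζ) X =
      !![X 0 0, r ^ 2 * X 0 1; r' ^ 2 * X 1 0, X 1 1] := fun X => conj_D ζ X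
  have hconjDζ' : ∀ X : Matrix (Fin 2) (Fin 2) (ZMod p), conjFull p (Dm ζ⁻¹) X =
      !![X 0 0, r' ^ 2 * X 0 1; r ^ 2 * X 1 0, X 1 1] := by
    intro X
    rw [conj_D, inv_inv]
  clear_value r r'
  -- cocycle basics
  have hC1 : C 1 = 0 := by
    have h := hC 1 1
    rw [mul_one, conj_one] at h
    exact (right_eq_add.mp h)
  -- diagonal of C (Dm ζ) vanishes
  have hSn : ∀ n : ℕ, (Dm ζ) ^ n = Dm (ζ ^ n) := by
    intro n
    induction n with
    | zero => rw [pow_zero, pow_zero, Dm_one]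
    | succ n ih => rw [pow_succ, pow_succ, ih, Dm_mul]
  have hpow00 : ∀ n : ℕ, C ((Dm ζ) ^ n) 0 0 = n * C (Dm ζ) 0 0 := by
    intro n
    induction n with
    | zero => rw [pow_zero, hC1]; simp
    | succ n ih =>
      rw [pow_succ', hC, hconjDζ, Matrix.add_apply]
      simp only [Matrix.cons_val', Matrix.cons_val_zero, Matrix.empty_val',
        Matrix.cons_val_fin_one, Matrix.of_apply]
      rw [ih]
      push_cast
      ring
  have hSp : (Dm ζ) ^ (p - 1) = 1 := by
    rw [hSn, ← hord, pow_orderOf_eq_one, Dm_one]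
  have hCS00 : C (Dm ζ) 0 0 = 0 := by
    have h := hpow00 (p - 1)
    rw [hSp, hC1] at h
    simp only [Matrix.zero_apply] at h
    have hp1 : ((p - 1 : ℕ) : ZMod p) ≠ 0 := by
      rw [Ne, ZMod.natCast_eq_zero_iff]
      intro hdvd
      have := Nat.le_of_dvd (by omega) hdvd
      omega
    rcases mul_eq_zero.mp h.symm with h' | h'
    · exact absurd h' hp1
    · exact h'
  have hCS11 : C (Dm ζ) 1 1 = 0 := by
    have h := htr (Dm ζ)
    rw [Matrix.trace_fin_two, hCS00, zero_add] at h
    exact h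
  -- first coboundary subtraction
  set B₁ : Matrix (Fin 2) (Fin 2) (ZMod p) :=
    !![0, C (Dm ζ) 0 1 / (r ^ 2 - 1); C (Dm ζ) 1 0 / (r' ^ 2 - 1), 0] with hB₁
  set D : SL p → Matrix (Fin 2) (Fin 2) (ZMod p) :=
    fun g => C g - (conjFull p g B₁ - B₁) with hDdef
  clear_value B₁ D
  have hD : ∀ g h, D (g * h) = conjFull p g (D h) + D g := by
    intro g h
    simp only [hDdef]
    exact sub_cob hC B₁ g h
  have hDtr : ∀ g, Matrix.trace (D g) = 0 := by
    intro g
    simp only [hDdef]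
    rw [Matrix.trace_sub, Matrix.trace_sub, trace_conj, htr]
    ring
  have hD1 : D 1 = 0 := by
    simp only [hDdef]
    rw [hC1, conj_one]
    abel
  have hDS : D (Dm ζ) = 0 := by
    simp only [hDdef]
    rw [hB₁, hconjDζ]
    ext i j
    fin_cases i <;> fin_cases j
    · simp [hCS00]
    · simp only [Matrix.sub_apply, Matrix.cons_val', Matrix.cons_val_zero, Matrix.cons_val_one,
        Matrix.head_cons, Matrix.empty_val', Matrix.cons_val_fin_one, Matrix.of_apply,
        Matrix.head_fin_const, Matrix.zero_apply, Fin.zero_eta, Fin.mk_one]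
      field_simp [hr21]
      try ring
    · simp only [Matrix.sub_apply, Matrix.cons_val', Matrix.cons_val_zero, Matrix.cons_val_one,
        Matrix.head_cons, Matrix.empty_val', Matrix.cons_val_fin_one, Matrix.of_apply,
        Matrix.head_fin_const, Matrix.zero_apply, Fin.zero_eta, Fin.mk_one]
      field_simp [hr'21]
      try ring
    · simp [hCS11]
  have hDSi : D (Dm ζ)⁻¹ = 0 := by
    have h := hD (Dm ζ) (Dm ζ)⁻¹
    rw [mul_inv_cancel, hD1, hDS, add_zero] at h
    have h2' := congrArg (conjFull p (Dm ζ)⁻¹) h.symm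
    rwa [conj_conj_inv, map_zero] at h2'
  have hDconj : ∀ g, D (Dm ζ * g * (Dm ζ)⁻¹) = conjFull p (Dm ζ) (D g) := by
    intro g
    rw [hD (Dm ζ * g) (Dm ζ)⁻¹, hDSi, map_zero, zero_add, hD, hDS, add_zero]
  -- torus action on unipotents
  have hUS : ∀ x : ZMod p, Dm ζ * Um x * (Dm ζ)⁻¹ = Um (r ^ 2 * x) := by
    intro x
    rw [Dm_inv]
    apply Subtype.ext
    rw [Matrix.SpecialLinearGroup.coe_mul, Matrix.SpecialLinearGroup.coe_mul,
      hDmcoe, hDmcoe', Um_coe, Um_coe]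
    ext i j
    fin_cases i <;> fin_cases j
    · simp [Matrix.mul_apply, Fin.sum_univ_two]
      linear_combination hrr'
    · simp [Matrix.mul_apply, Fin.sum_univ_two]; ring
    · simp [Matrix.mul_apply, Fin.sum_univ_two]
    · simp [Matrix.mul_apply, Fin.sum_univ_two]
      linear_combination hrr'
  have hLS : ∀ y : ZMod p, Dm ζ * Lm y * (Dm ζ)⁻¹ = Lm (r' ^ 2 * y) := by
    intro y
    rw [Dm_inv]
    apply Subtype.ext
    rw [Matrix.SpecialLinearGroup.coe_mul, Matrix.SpecialLinearGroup.coe_mul,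
      hDmcoe, hDmcoe', Lm_coe, Lm_coe]
    ext i j
    fin_cases i <;> fin_cases j
    · simp [Matrix.mul_apply, Fin.sum_univ_two]
      linear_combination hrr'
    · simp [Matrix.mul_apply, Fin.sum_univ_two]
    · simp [Matrix.mul_apply, Fin.sum_univ_two]; ring
    · simp [Matrix.mul_apply, Fin.sum_univ_two]
      linear_combination hrr'
  have hDU_conj : ∀ x, D (Um (r ^ 2 * x)) = conjFull p (Dm ζ) (D (Um x)) := by
    intro x
    rw [← hUS, hDconj]
  have hDU_add : ∀ x y, D (Um (x + y)) = conjFull p (Um x) (D (Um y)) + D (Um x) := by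
    intro x y
    rw [← Um_mul, hD]
  have hDL_conj : ∀ y, D (Lm (r' ^ 2 * y)) = conjFull p (Dm ζ) (D (Lm y)) := by
    intro y
    rw [← hLS, hDconj]
  have hDL_add : ∀ x y, D (Lm (x + y)) = conjFull p (Lm x) (D (Lm y)) + D (Lm x) := by
    intro x y
    rw [← Lm_mul, hD]
  -- entries of D on Um
  have h10add : ∀ x y : ZMod p, D (Um (x + y)) 1 0 = D (Um x) 1 0 + D (Um y) 1 0 := by
    intro x y
    rw [hDU_add x y, conj_U, Matrix.add_apply]
    simp
    ring
  have hlin10 := fun x => add_lin hp (fun z => D (Um z) 1 0) (fun x y => h10add x y) x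
  have h10 : ∀ x : ZMod p, D (Um x) 1 0 = 0 := by
    suffices hz : D (Um 1) 1 0 = 0 by
      intro x
      rw [hlin10 x, hz, zero_mul]
    have h := congr_entry (hDU_conj 1) 1 0
    rw [hconjDζ] at h
    simp only [Matrix.cons_val', Matrix.cons_val_zero, Matrix.cons_val_one, Matrix.head_cons,
      Matrix.empty_val', Matrix.cons_val_fin_one, Matrix.of_apply, Matrix.head_fin_const] at h
    rw [hlin10 (r ^ 2 * 1)] at h
    have h4 : (r ^ 2 - r' ^ 2) * D (Um 1) 1 0 = 0 := by linear_combination h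
    rcases mul_eq_zero.mp h4 with h' | h'
    · exact absurd h' hr24
    · exact h'
  have h00add : ∀ x y : ZMod p, D (Um (x + y)) 0 0 = D (Um x) 0 0 + D (Um y) 0 0 := by
    intro x y
    rw [hDU_add x y, conj_U, Matrix.add_apply]
    simp [h10]
    ring
  have hlin00 := fun x => add_lin hp (fun z => D (Um z) 0 0) (fun x y => h00add x y) x
  have h00 : ∀ x : ZMod p, D (Um x) 0 0 = 0 := by
    suffices hz : D (Um 1) 0 0 = 0 by
      intro x
      rw [hlin00 x, hz, zero_mul]
    have h := congr_entry (hDU_conj 1) 0 0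
    rw [hconjDζ] at h
    simp only [Matrix.cons_val', Matrix.cons_val_zero, Matrix.cons_val_one, Matrix.head_cons,
      Matrix.empty_val', Matrix.cons_val_fin_one, Matrix.of_apply, Matrix.head_fin_const] at h
    rw [hlin00 (r ^ 2 * 1)] at h
    have h4 : (r ^ 2 - 1) * D (Um 1) 0 0 = 0 := by linear_combination h
    rcases mul_eq_zero.mp h4 with h' | h'
    · exact absurd h' hr21
    · exact h'
  have h11 : ∀ x : ZMod p, D (Um x) 1 1 = 0 := by
    intro x
    have h := hDtr (Um x)
    rw [Matrix.trace_fin_two, h00, zero_add] at h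
    exact h
  have h01add : ∀ x y : ZMod p, D (Um (x + y)) 0 1 = D (Um x) 0 1 + D (Um y) 0 1 := by
    intro x y
    rw [hDU_add x y, conj_U, Matrix.add_apply]
    simp [h10, h00, h11]
    ring
  have hlin01 := fun x => add_lin hp (fun z => D (Um z) 0 1) (fun x y => h01add x y) x
  have hDUval : ∀ x : ZMod p, D (Um x) = !![0, D (Um 1) 0 1 * x; 0, 0] := by
    intro x
    ext i j
    fin_cases i <;> fin_cases j
    · simpa using h00 x
    · simpa using hlin01 x
    · simpa using h10 x
    · simpa using h11 x
  -- entries of D on Lm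
  have k01add : ∀ x y : ZMod p, D (Lm (x + y)) 0 1 = D (Lm x) 0 1 + D (Lm y) 0 1 := by
    intro x y
    rw [hDL_add x y, conj_L, Matrix.add_apply]
    simp
    ring
  have klin01 := fun x => add_lin hp (fun z => D (Lm z) 0 1) (fun x y => k01add x y) x
  have k01 : ∀ y : ZMod p, D (Lm y) 0 1 = 0 := by
    suffices hz : D (Lm 1) 0 1 = 0 by
      intro y
      rw [klin01 y, hz, zero_mul]
    have h := congr_entry (hDL_conj 1) 0 1
    rw [hconjDζ] at h
    simp only [Matrix.cons_val', Matrix.cons_val_zero, Matrix.cons_val_one, Matrix.head_cons,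
      Matrix.empty_val', Matrix.cons_val_fin_one, Matrix.of_apply, Matrix.head_fin_const] at h
    rw [klin01 (r' ^ 2 * 1)] at h
    have h4 : (r ^ 2 - r' ^ 2) * D (Lm 1) 0 1 = 0 := by linear_combination -h
    rcases mul_eq_zero.mp h4 with h' | h'
    · exact absurd h' hr24
    · exact h'
  have k00add : ∀ x y : ZMod p, D (Lm (x + y)) 0 0 = D (Lm x) 0 0 + D (Lm y) 0 0 := by
    intro x y
    rw [hDL_add x y, conj_L, Matrix.add_apply]
    simp [k01]
    ring
  have klin00 := fun x => add_lin hp (fun z => D (Lm z) 0 0) (fun x y => k00add x y) x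
  have k00 : ∀ y : ZMod p, D (Lm y) 0 0 = 0 := by
    suffices hz : D (Lm 1) 0 0 = 0 by
      intro y
      rw [klin00 y, hz, zero_mul]
    have h := congr_entry (hDL_conj 1) 0 0
    rw [hconjDζ] at h
    simp only [Matrix.cons_val', Matrix.cons_val_zero, Matrix.cons_val_one, Matrix.head_cons,
      Matrix.empty_val', Matrix.cons_val_fin_one, Matrix.of_apply, Matrix.head_fin_const] at h
    rw [klin00 (r' ^ 2 * 1)] at h
    have h4 : (r' ^ 2 - 1) * D (Lm 1) 0 0 = 0 := by linear_combination h
    rcases mul_eq_zero.mp h4 with h' | h'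
    · exact absurd h' hr'21
    · exact h'
  have k11 : ∀ y : ZMod p, D (Lm y) 1 1 = 0 := by
    intro y
    have h := hDtr (Lm y)
    rw [Matrix.trace_fin_two, k00, zero_add] at h
    exact h
  have k10add : ∀ x y : ZMod p, D (Lm (x + y)) 1 0 = D (Lm x) 1 0 + D (Lm y) 1 0 := by
    intro x y
    rw [hDL_add x y, conj_L, Matrix.add_apply]
    simp [k00, k01, k11]
    ring
  have klin10 := fun x => add_lin hp (fun z => D (Lm z) 1 0) (fun x y => k10add x y) x
  have hDLval : ∀ y : ZMod p, D (Lm y) = !![0, 0; D (Lm 1) 1 0 * y, 0] := by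
    intro y
    ext i j
    fin_cases i <;> fin_cases j
    · simpa using k00 y
    · simpa using k01 y
    · simpa using klin10 y
    · simpa using k11 y
  -- second coboundary subtraction
  set lam : ZMod p := D (Um 1) 0 1 with hlam
  set mu : ZMod p := D (Lm 1) 1 0 with hmu
  set B₂ : Matrix (Fin 2) (Fin 2) (ZMod p) := !![-(lam / 2), 0; 0, lam / 2] with hB₂
  set E : SL p → Matrix (Fin 2) (Fin 2) (ZMod p) :=
    fun g => D g - (conjFull p g B₂ - B₂) with hEdef
  clear_value B₂ E
  have hE : ∀ g h, E (g * h) = conjFull p g (E h) + E g := by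
    intro g h
    simp only [hEdef]
    exact sub_cob hD B₂ g h
  have hE1 : E 1 = 0 := by
    simp only [hEdef]
    rw [hD1, conj_one]
    abel
  have hEinv : ∀ g, E g = 0 → E g⁻¹ = 0 := by
    intro g hg
    have h := hE g g⁻¹
    rw [mul_inv_cancel, hE1, hg, add_zero] at h
    have h2' := congrArg (conjFull p g⁻¹) h.symm
    rwa [conj_conj_inv, map_zero] at h2'
  have hEmul : ∀ g h, E g = 0 → E h = 0 → E (g * h) = 0 := by
    intro g h hg hh
    rw [hE, hg, hh, map_zero, add_zero]
  have hEU : ∀ x : ZMod p, E (Um x) = 0 := by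
    intro x
    simp only [hEdef]
    rw [hDUval, hB₂, conj_U]
    ext i j
    fin_cases i <;> fin_cases j
    · simp
    · simp only [Matrix.sub_apply, Matrix.cons_val', Matrix.cons_val_zero, Matrix.cons_val_one,
        Matrix.head_cons, Matrix.empty_val', Matrix.cons_val_fin_one, Matrix.of_apply,
        Matrix.head_fin_const, Matrix.zero_apply, Fin.zero_eta, Fin.mk_one]
      field_simp [h2]
      try ring
    · simp
    · simp
  have hES : E (Dm ζ) = 0 := by
    simp only [hEdef]
    rw [hDS, hB₂, hconjDζ]
    ext i j
    fin_cases i <;> fin_cases j <;> simp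
  have hEL : ∀ y : ZMod p, E (Lm y) = !![0, 0; (mu + lam) * y, 0] := by
    intro y
    simp only [hEdef]
    rw [hDLval, hB₂, conj_L]
    ext i j
    fin_cases i <;> fin_cases j
    · simp
    · simp
    · simp only [Matrix.sub_apply, Matrix.cons_val', Matrix.cons_val_zero, Matrix.cons_val_one,
        Matrix.head_cons, Matrix.empty_val', Matrix.cons_val_fin_one, Matrix.of_apply,
        Matrix.head_fin_const, Matrix.zero_apply, Fin.zero_eta, Fin.mk_one]
      field_simp [h2]
      try ring
    · simp
  -- kill (mu + lam) using the Weyl element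
  have hwcoe : ((Um 1 * Lm (-1) * Um 1 : SL p) : Matrix (Fin 2) (Fin 2) (ZMod p)) =
      !![0, 1; -1, 0] := by
    rw [Matrix.SpecialLinearGroup.coe_mul, Matrix.SpecialLinearGroup.coe_mul,
      Um_coe, Lm_coe]
    ext i j
    fin_cases i <;> fin_cases j <;> simp [Matrix.mul_apply, Fin.sum_univ_two]
  have hEw : E (Um 1 * Lm (-1) * Um 1) = !![-(mu + lam), mu + lam; -(mu + lam), mu + lam] := by
    rw [hE, hEU, map_zero, zero_add, hE, hEU, add_zero, hEL, conj_U]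
    ext i j
    fin_cases i <;> fin_cases j <;> (simp; try ring)
  have hwS : (Um 1 * Lm (-1) * Um 1) * Dm ζ = (Dm ζ)⁻¹ * (Um 1 * Lm (-1) * Um 1) := by
    rw [Dm_inv]
    apply Subtype.ext
    rw [Matrix.SpecialLinearGroup.coe_mul (Um 1 * Lm (-1) * Um 1) (Dm ζ),
      Matrix.SpecialLinearGroup.coe_mul (Dm ζ⁻¹) (Um 1 * Lm (-1) * Um 1), hwcoe,
      hDmcoe, hDmcoe']
    ext i j
    fin_cases i <;> fin_cases j <;> simp [Matrix.mul_apply, Fin.sum_univ_two]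
  have hnu0 : mu + lam = 0 := by
    have h1 : E ((Um 1 * Lm (-1) * Um 1) * Dm ζ) = E (Um 1 * Lm (-1) * Um 1) := by
      rw [hE, hES, map_zero, zero_add]
    have h2' : E ((Dm ζ)⁻¹ * (Um 1 * Lm (-1) * Um 1)) =
        conjFull p (Dm ζ)⁻¹ (E (Um 1 * Lm (-1) * Um 1)) := by
      rw [hE, hEinv _ hES, add_zero]
    rw [hwS, h2', hEw, Dm_inv, hconjDζ'] at h1
    have h3 := congr_entry h1 0 1
    simp only [Matrix.cons_val', Matrix.cons_val_zero, Matrix.cons_val_one, Matrix.head_cons,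
      Matrix.empty_val', Matrix.cons_val_fin_one, Matrix.of_apply, Matrix.head_fin_const] at h3
    have h4 : (r' ^ 2 - 1) * (mu + lam) = 0 := by linear_combination h3
    rcases mul_eq_zero.mp h4 with h' | h'
    · exact absurd h' hr'21
    · exact h'
  have hEL0 : ∀ y : ZMod p, E (Lm y) = 0 := by
    intro y
    rw [hEL, hnu0]
    ext i j
    fin_cases i <;> fin_cases j <;> simp
  -- generation of SL₂ by elementary matrices
  have hne : ∀ g : SL p, (g : Matrix (Fin 2) (Fin 2) (ZMod p)) 1 0 ≠ 0 → E g = 0 := by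
    intro g hg
    have hdet : (g : Matrix (Fin 2) (Fin 2) (ZMod p)) 0 0 * (g : Matrix (Fin 2) (Fin 2) (ZMod p)) 1 1
        - (g : Matrix (Fin 2) (Fin 2) (ZMod p)) 0 1 * (g : Matrix (Fin 2) (Fin 2) (ZMod p)) 1 0 = 1 := by
      have h := g.2
      rwa [Matrix.det_fin_two] at h
    have hdec : g = Um (((g : Matrix (Fin 2) (Fin 2) (ZMod p)) 0 0 - 1) /
          (g : Matrix (Fin 2) (Fin 2) (ZMod p)) 1 0) *
        Lm ((g : Matrix (Fin 2) (Fin 2) (ZMod p)) 1 0) *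
        Um (((g : Matrix (Fin 2) (Fin 2) (ZMod p)) 1 1 - 1) /
          (g : Matrix (Fin 2) (Fin 2) (ZMod p)) 1 0) := by
      apply Subtype.ext
      rw [Matrix.SpecialLinearGroup.coe_mul, Matrix.SpecialLinearGroup.coe_mul,
        Um_coe, Lm_coe, Um_coe]
      ext i j
      fin_cases i <;> fin_cases j
      · simp only [Matrix.mul_apply, Fin.sum_univ_two, Matrix.cons_val', Matrix.cons_val_zero,
          Matrix.cons_val_one, Matrix.head_cons, Matrix.empty_val', Matrix.cons_val_fin_one,
          Matrix.of_apply, Matrix.head_fin_const, Fin.zero_eta, Fin.mk_one]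
        field_simp
        ring
      · simp only [Matrix.mul_apply, Fin.sum_univ_two, Matrix.cons_val', Matrix.cons_val_zero,
          Matrix.cons_val_one, Matrix.head_cons, Matrix.empty_val', Matrix.cons_val_fin_one,
          Matrix.of_apply, Matrix.head_fin_const, Fin.zero_eta, Fin.mk_one]
        field_simp
        linear_combination -hdet
      · simp only [Matrix.mul_apply, Fin.sum_univ_two, Matrix.cons_val', Matrix.cons_val_zero,
          Matrix.cons_val_one, Matrix.head_cons, Matrix.empty_val', Matrix.cons_val_fin_one,
          Matrix.of_apply, Matrix.head_fin_const, Fin.zero_eta, Fin.mk_one]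
        field_simp
        ring
      · simp only [Matrix.mul_apply, Fin.sum_univ_two, Matrix.cons_val', Matrix.cons_val_zero,
          Matrix.cons_val_one, Matrix.head_cons, Matrix.empty_val', Matrix.cons_val_fin_one,
          Matrix.of_apply, Matrix.head_fin_const, Fin.zero_eta, Fin.mk_one]
        field_simp
        ring
      
    rw [hdec]
    exact hEmul _ _ (hEmul _ _ (hEU _) (hEL0 _)) (hEU _)
  have hEall : ∀ g : SL p, E g = 0 := by
    intro g
    by_cases hg : (g : Matrix (Fin 2) (Fin 2) (ZMod p)) 1 0 = 0
    · have hd : (g : Matrix (Fin 2) (Fin 2) (ZMod p)) 1 1 ≠ 0 := by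
        intro h
        have hdet := g.2
        rw [Matrix.det_fin_two, hg, h] at hdet
        simp at hdet
      have hw0 : E (Um 1 * Lm (-1) * Um 1) = 0 :=
        hEmul _ _ (hEmul _ _ (hEU 1) (hEL0 (-1))) (hEU 1)
      have hgw : ((g * (Um 1 * Lm (-1) * Um 1) : SL p) : Matrix (Fin 2) (Fin 2) (ZMod p)) 1 0 ≠ 0 := by
        rw [Matrix.SpecialLinearGroup.coe_mul, hwcoe]
        intro h
        apply hd
        rw [Matrix.mul_apply, Fin.sum_univ_two] at h
        simp at h
        exact h
      have h1 := hne _ hgw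
      have h2' := hEmul _ _ h1 (hEinv _ hw0)
      rwa [mul_inv_cancel_right] at h2'
    · exact hne g hg
  -- conclusion
  refine ⟨B₁ + B₂, ?_, ?_⟩
  · rw [Matrix.trace_add, hB₁, hB₂, Matrix.trace_fin_two, Matrix.trace_fin_two]
    simp
  · intro g
    have h := hEall g
    simp only [hEdef, hDdef] at h
    rw [sub_sub] at h
    have h' := sub_eq_zero.mp h
    rw [h', map_add]
    abel


end SL2Aux

/-- For a prime `p ≥ 7`, the first group cohomology
`H¹(SL₂(𝔽_p), sl₂(𝔽_p))` of the conjugation representation vanishes. -/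
theorem groupCohomology_one_sl2_isZero (p : ℕ) (hp : p.Prime) (hp7 : 7 ≤ p) :
    CategoryTheory.Limits.IsZero (groupCohomology (Rep.of (sl2Rep p)) 1) := by
  haveI := Fact.mk hp
  set A := Rep.of (sl2Rep p) with hA
  have hsub : Subsingleton (groupCohomology.H1 A) := by
    refine ⟨fun a b => ?_⟩
    suffices hz : ∀ x : groupCohomology.H1 A, x = 0 by rw [hz a, hz b]
    intro x
    refine groupCohomology.H1_induction_on x fun f => ?_
    have hf := (groupCohomology.mem_cocycles₁_iff (f : SL p → A)).1 f.2
    let F : SL p → sl2 p := fun g => f g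
    have hC : ∀ g h : SL p, (F (g*h) : Matrix (Fin 2) (Fin 2) (ZMod p))
        = conjFull p g (F h : Matrix (Fin 2) (Fin 2) (ZMod p)) + (F g : Matrix (Fin 2) (Fin 2) (ZMod p)) := by
      intro g h
      have h2 : F (g * h) = sl2Rep p g (F h) + F g := hf g h
      have := congrArg (Subtype.val) h2
      rw [this]
      rfl
    have htr : ∀ g : SL p, Matrix.trace (F g : Matrix (Fin 2) (Fin 2) (ZMod p)) = 0 := by
      intro g
      exact (F g).2
    obtain ⟨B, hBtr, hB⟩ := SL2Aux.key p hp hp7 (fun g => (F g : Matrix (Fin 2) (Fin 2) (ZMod p))) hC htr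
    rw [groupCohomology.H1π_eq_zero_iff]
    have hBmem : B ∈ sl2 p := hBtr
    refine ⟨(⟨B, hBmem⟩ : sl2 p), funext fun g => ?_⟩
    show sl2Rep p g ⟨B, hBmem⟩ - ⟨B, hBmem⟩ = F g
    apply Subtype.ext
    rw [Submodule.coe_sub]
    have h1 : ((sl2Rep p g ⟨B, hBmem⟩ : sl2 p) : Matrix (Fin 2) (Fin 2) (ZMod p)) = conjFull p g B := rfl
    rw [h1, ← hB g]
  exact ModuleCat.isZero_of_subsingleton _
end

section
/- Let K be a number field, p a rational prime, 𝔭 a prime of the ring of integers of K lying above p with associated valuation v, and k ≥ 2 an integer. Let α, β ∈ K be nonzero elements such that: (i) |σ(α)| = |σ(β)| = p^{(k−1)/2} for every field embedding σ : K → ℂ; (ii) α is a unit at 𝔭 (v(α) = 0); and (iii) αβ = ε p^{k−1} for some root of unity ε ∈ K. Let ψ ∈ K be a root of unity. Then for every integer s with 1 ≤ s ≤ k−1, the element (1 − p^{s−1} ψ^{−1} α^{−2})(1 − ψ α β p^{−s})(1 − ψ β² p^{−s}) of K is zero if and only if εψ = 1 and s = k−1. -/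
open scoped Multiplicative

lemma aux_abs_one {K : Type*} [Field K] (σ : K →+* ℂ) {x : K} (hx : IsOfFinOrder x) :
    ‖σ x‖ = 1 := by
  obtain ⟨n, hn, h⟩ := hx.exists_pow_eq_one
  have h1 : ‖σ x‖ ^ n = 1 := by
    rw [← norm_pow, ← map_pow, h, map_one, norm_one]
  rcases lt_trichotomy ‖σ x‖ 1 with hl | he | hg
  · exact absurd h1 (pow_lt_one₀ (norm_nonneg _) hl hn.ne').ne
  · exact he
  · exact absurd h1 (one_lt_pow₀ hg hn.ne').ne'

lemma aux_finOrder_ne_zero {K : Type*} [Field K] {x : K} (hx : IsOfFinOrder x) : x ≠ 0 := by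
  obtain ⟨n, hn, h⟩ := hx.exists_pow_eq_one
  intro h0
  rw [h0, zero_pow hn.ne'] at h
  exact zero_ne_one h

lemma aux_val_one {K : Type*} [Field K]
    (w : Valuation K (WithZero (Multiplicative ℤ))) {x : K} (hx : IsOfFinOrder x) : w x = 1 := by
  obtain ⟨n, hn, h⟩ := hx.exists_pow_eq_one
  have h1 : (w x) ^ n = 1 := by rw [← map_pow, h, map_one]
  rcases lt_trichotomy (w x) 1 with hl | he | hg
  · exact absurd h1 (pow_lt_one₀ zero_le' hl hn.ne').ne
  · exact he
  · exact absurd h1 (one_lt_pow₀ hg hn.ne').ne'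

/-- Vanishing criterion for the interpolation factor `𝓔_p(s, 1)` of the
`p`-adic symmetric square `L`-function in the range `1 ≤ s ≤ k − 1`: with `α, β` Weil
numbers of weight `k − 1` at `p`, `α` a unit at a prime `𝔭` above `p`, `αβ = ε p^{k−1}`
for a root of unity `ε`, and `ψ` a root of unity, the product
`(1 − p^{s−1}ψ⁻¹α⁻²)(1 − ψαβp^{−s})(1 − ψβ²p^{−s})` vanishes iff `εψ = 1` and `s = k − 1`. -/
theorem interpolation_factor_eq_zero_iff
    (K : Type*) [Field K] [NumberField K]
    (p : ℕ) (hp : p.Prime) (k : ℕ) (hk : 2 ≤ k)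
    (v : IsDedekindDomain.HeightOneSpectrum (NumberField.RingOfIntegers K))
    (hv : (p : NumberField.RingOfIntegers K) ∈ v.asIdeal)
    (α β : K) (hα0 : α ≠ 0) (hβ0 : β ≠ 0)
    (habs : ∀ σ : K →+* ℂ, ‖σ α‖ = (p : ℝ) ^ (((k : ℝ) - 1) / 2) ∧
      ‖σ β‖ = (p : ℝ) ^ (((k : ℝ) - 1) / 2))
    (hαunit : v.valuation K α = 1)
    (ε : K) (hε : IsOfFinOrder ε) (hαβ : α * β = ε * (p : K) ^ (k - 1))
    (ψ : K) (hψ : IsOfFinOrder ψ) :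
    ∀ s : ℤ, 1 ≤ s → s ≤ (k : ℤ) - 1 →
      ((1 - (p : K) ^ (s - 1) * ψ⁻¹ * α⁻¹ ^ 2) * (1 - ψ * (α * β) * (p : K) ^ (-s)) *
          (1 - ψ * β ^ 2 * (p : K) ^ (-s)) = 0 ↔
        ε * ψ = 1 ∧ s = (k : ℤ) - 1) := by
  intro s hs1 hs2
  obtain ⟨σ⟩ : Nonempty (K →+* ℂ) := by
    refine Fintype.card_pos_iff.mp ?_
    rw [NumberField.Embeddings.card K ℂ]
    exact Module.finrank_pos
  have hpR : (1:ℝ) < p := by exact_mod_cast hp.one_lt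
  have hpR0 : (0:ℝ) ≤ p := by positivity
  have hpK : (p:K) ≠ 0 := Nat.cast_ne_zero.mpr hp.pos.ne'
  have hψ0 : ψ ≠ 0 := aux_finOrder_ne_zero hψ
  have hε0 : ε ≠ 0 := aux_finOrder_ne_zero hε
  have hψabs : ‖σ ψ‖ = 1 := aux_abs_one σ hψ
  have hεabs : ‖σ ε‖ = 1 := aux_abs_one σ hε
  have hk1 : (1:ℕ) ≤ k := by omega
  have hP2 : ((p:ℝ) ^ (((k:ℝ)-1)/2)) ^ 2 = (p:ℝ) ^ (k-1:ℕ) := by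
    rw [← Real.rpow_natCast ((p:ℝ) ^ (((k:ℝ)-1)/2)) 2, ← Real.rpow_mul hpR0,
      ← Real.rpow_natCast (p:ℝ) (k-1)]
    congr 1
    rw [Nat.cast_sub hk1]
    push_cast
    ring
  constructor
  · intro h
    rcases mul_eq_zero.mp h with h12 | h3
    · rcases mul_eq_zero.mp h12 with h1 | h2
      · -- factor 1 = 0 : impossible
        exfalso
        have hX : (1:K) = (p:K) ^ (s-1) * ψ⁻¹ * α⁻¹ ^ 2 := sub_eq_zero.mp h1
        have h2 : ψ * α ^ 2 = (p:K) ^ (s-1) := by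
          field_simp at hX
          exact hX
        set t : ℕ := (s-1).toNat with htdef
        have ht : s - 1 = (t:ℤ) := by omega
        rw [ht, zpow_natCast] at h2
        have h3 := congrArg (fun x => ‖σ x‖) h2
        simp only [map_mul, map_pow, norm_mul, norm_pow, map_natCast, Complex.norm_natCast, hψabs,
          (habs σ).1, one_mul] at h3
        rw [hP2] at h3
        have h4 : (p:ℝ) ^ (k-1:ℕ) = (p:ℝ) ^ t := h3
        have h5 : k - 1 = t := by
          have : ((p ^ (k-1) : ℕ) : ℝ) = ((p ^ t : ℕ) : ℝ) := by push_cast; exact h4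
          exact Nat.pow_right_injective hp.two_le (Nat.cast_injective this)
        omega
      · -- factor 2 = 0 : conclusion
        have hX : (1:K) = ψ * (α * β) * (p:K) ^ (-s) := sub_eq_zero.mp h2
        set t : ℕ := ((k:ℤ) - 1 - s).toNat with htdef
        have ht : (k:ℤ) - 1 - s = (t:ℤ) := by omega
        have hpow : (p:K) ^ (k-1:ℕ) * (p:K) ^ (-s) = (p:K) ^ (t:ℕ) := by
          rw [← zpow_natCast (p:K) (k-1), ← zpow_add₀ hpK, ← zpow_natCast (p:K) t]
          congr 1
          omega
        have h2' : ψ * ε * (p:K) ^ (t:ℕ) = 1 := by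
          rw [hαβ] at hX
          calc ψ * ε * (p:K) ^ (t:ℕ) = ψ * ε * ((p:K) ^ (k-1:ℕ) * (p:K) ^ (-s)) := by
                rw [hpow]
            _ = ψ * (ε * (p:K) ^ (k-1)) * (p:K) ^ (-s) := by ring
            _ = 1 := hX.symm
        have habs2 := congrArg (fun x => ‖σ x‖) h2'
        simp only [map_mul, map_pow, map_one, norm_mul, norm_pow, norm_one, map_natCast, Complex.norm_natCast,
          hψabs, hεabs, one_mul] at habs2
        have ht0 : t = 0 := by
          by_contra htne
          exact (one_lt_pow₀ hpR htne).ne' habs2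
        refine ⟨?_, by omega⟩
        rw [ht0, pow_zero, mul_one] at h2'
        rw [mul_comm] at h2'
        exact h2'
    · -- factor 3 = 0 : impossible
      exfalso
      have hX : (1:K) = ψ * β ^ 2 * (p:K) ^ (-s) := sub_eq_zero.mp h3
      set u : ℕ := s.toNat with hudef
      have hu : s = (u:ℤ) := by omega
      have h2 : ψ * β ^ 2 = (p:K) ^ (u:ℕ) := by
        have hps : (p:K) ^ (-s) = ((p:K) ^ (u:ℕ))⁻¹ := by
          rw [zpow_neg, hu, zpow_natCast]
        rw [hps] at hX
        field_simp at hX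
        exact hX.symm
      have hvψ : v.valuation K ψ = 1 := aux_val_one (v.valuation K) hψ
      have hvε : v.valuation K ε = 1 := aux_val_one (v.valuation K) hε
      set x : WithZero (Multiplicative ℤ) := v.valuation K ((p:K)) with hxdef
      have hx0 : x ≠ 0 := (Valuation.ne_zero_iff _).mpr hpK
      have hx1 : x < 1 := by
        have hmap : algebraMap (NumberField.RingOfIntegers K) K
            ((p : NumberField.RingOfIntegers K)) = (p:K) := map_natCast _ p
        rw [hxdef, ← hmap]
        exact (v.valuation_lt_one_iff_dvd _).mpr (Ideal.dvd_span_singleton.mpr hv)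
      have hvβ : v.valuation K β = x ^ (k-1:ℕ) := by
        have hh := congrArg (v.valuation K) hαβ
        simp only [map_mul, map_pow, hαunit, hvε, one_mul] at hh
        exact hh
      have hval : x ^ (2*(k-1)) = x ^ u := by
        have hh := congrArg (v.valuation K) h2
        simp only [map_mul, map_pow, hvψ, hvβ, one_mul] at hh
        rw [← pow_mul] at hh
        rw [mul_comm (k-1) 2] at hh
        exact hh
      have hule : u ≤ k - 1 := by omega
      set m : ℕ := 2*(k-1) - u with hmdef
      have hm : m ≠ 0 := by omega
      have hsplit : x ^ u * x ^ m = x ^ u * 1 := by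
        rw [← pow_add, mul_one]
        rw [show u + m = 2*(k-1) by omega]
        exact hval
      have hxm : x ^ m = 1 := mul_left_cancel₀ (pow_ne_zero u hx0) hsplit
      exact (pow_lt_one₀ zero_le' hx1 hm).ne hxm
  · rintro ⟨hεψ, rfl⟩
    have hpow : (p:K) ^ (k-1:ℕ) * (p:K) ^ (-((k:ℤ)-1)) = 1 := by
      rw [← zpow_natCast (p:K) (k-1), ← zpow_add₀ hpK,
        show ((k-1:ℕ):ℤ) + -((k:ℤ)-1) = 0 by omega, zpow_zero]
    have hmid : 1 - ψ * (α * β) * (p:K) ^ (-((k:ℤ)-1)) = 0 := by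
      rw [hαβ]
      calc 1 - ψ * (ε * (p:K) ^ (k-1)) * (p:K) ^ (-((k:ℤ)-1))
          = 1 - (ε * ψ) * ((p:K) ^ (k-1:ℕ) * (p:K) ^ (-((k:ℤ)-1))) := by ring
        _ = 0 := by rw [hεψ, hpow]; ring
    rw [hmid, mul_zero, zero_mul]
end
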